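/- arXiv:2511.00708 — 3 statements merged into one kernel-verified Lean document; each statement's English description precedes it below -/
import Mathlib

section
/- Let π*(x) = (1/2)(2π)^{−d/2}( e^{−‖x−μ₁‖²/2} + e^{−‖x−μ₂‖²/2} ) with μ₁ = (D,0,…,0) and μ₂ = −(D,0,…,0) for some D > 0. Consider the simulated tempering chain P* with x-proposal Q_i(x,·) = N(x, (2h/β_i)I_d) for some h > 0. Then for any s ∈ [0,1/2), Φ_s(P*) ≤ (4/(1−2s))·(2/(2+h))^{d/2}·exp( −β₁D²/(2+h) ). -/
open MeasureTheory
open scoped ENNReal RealInnerProductSpace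

noncomputable section

namespace ST

variable {X : Type*} [MeasurableSpace X]

/-- The probability flow `P(A, Aᶜ) = ∫_A P(x, Aᶜ) Π(dx)`. -/
def flow (Pi : Measure X) (P : X → Measure X) (A : Set X) : ℝ :=
  (∫⁻ x in A, P x Aᶜ ∂Pi).toReal

/-- The `s`-conductance `Φ_s(P)`. -/
def sCond (Pi : Measure X) (P : X → Measure X) (s : ℝ) : ℝ :=
  sInf { t : ℝ | ∃ A : Set X, MeasurableSet A ∧ s < (Pi A).toReal ∧ (Pi A).toReal ≤ 1 / 2 ∧
    t = flow Pi P A / ((Pi A).toReal - s) }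

/-- The Dirichlet form `E_P(g)`. -/
def dirichlet (Pi : Measure X) (P : X → Measure X) (g : X → ℝ) : ℝ :=
  (1 / 2) * ∫ x, (∫ y, (g y - g x) ^ 2 ∂(P x)) ∂Pi

/-- The variance `V_Π(g)`. -/
def variance (Pi : Measure X) (g : X → ℝ) : ℝ :=
  ∫ x, (g x - ∫ y, g y ∂Pi) ^ 2 ∂Pi

/-- The spectral gap `λ(P)`. -/
def gap (Pi : Measure X) (P : X → Measure X) : ℝ :=
  sInf { t : ℝ | ∃ g : X → ℝ, Measurable g ∧ 0 < variance Pi g ∧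
    t = dirichlet Pi P g / variance Pi g }

/-- Reversibility of the kernel `P` with respect to `Π`. -/
def Reversible (Pi : Measure X) (P : X → Measure X) : Prop :=
  ∀ A B : Set X, MeasurableSet A → MeasurableSet B →
    ∫⁻ x in A, P x B ∂Pi = ∫⁻ x in B, P x A ∂Pi

/-- `P` is a Markov kernel (each `P x` is a probability measure). -/
def IsMarkov (P : X → Measure X) : Prop := ∀ x, IsProbabilityMeasure (P x)

/-- Total variation distance between two measures. -/
def tvDist (μ ν : Measure X) : ℝ :=
  sSup { t : ℝ | ∃ A : Set X, MeasurableSet A ∧ t = |(μ A).toReal - (ν A).toReal| }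

/-- Metropolis–Hastings acceptance probability. -/
def mhAccept (pi : X → ℝ) (q : X → X → ℝ) (x y : X) : ℝ :=
  min 1 (pi y * q y x / (pi x * q x y))

/-- `P` is the Metropolis–Hastings kernel with target density `pi`,
proposal kernel `Q` having density `q`. -/
def IsMH (P : X → Measure X) (Q : X → Measure X) (pi : X → ℝ) (q : X → X → ℝ) : Prop :=
  ∀ x, P x =
    (Q x).withDensity (fun y => ENNReal.ofReal (mhAccept pi q x y)) +
      ENNReal.ofReal (1 - ∫ z, mhAccept pi q x z ∂(Q x)) • Measure.dirac x

/-- Dirichlet form of a finite-state chain. -/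
def finDirichlet {ι : Type*} [Fintype ι] (p : ι → ℝ) (M : ι → ι → ℝ) (g : ι → ℝ) : ℝ :=
  (1 / 2) * ∑ k, ∑ l, (g l - g k) ^ 2 * p k * M k l

/-- Variance of a function on a finite state space. -/
def finVariance {ι : Type*} [Fintype ι] (p : ι → ℝ) (g : ι → ℝ) : ℝ :=
  ∑ k, (g k - ∑ l, g l * p l) ^ 2 * p k

/-- Spectral gap of a finite-state chain. -/
def finGap {ι : Type*} [Fintype ι] (p : ι → ℝ) (M : ι → ι → ℝ) : ℝ :=
  sInf { t : ℝ | ∃ g : ι → ℝ, 0 < finVariance p g ∧ t = finDirichlet p M g / finVariance p g }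

/-- `ℝ^d` with the Euclidean norm. -/
abbrev E (d : ℕ) := EuclideanSpace ℝ (Fin d)

/-- `L`-smoothness of a function on `ℝ^d`. -/
def LSmooth {d : ℕ} (L : ℝ) (f : E d → ℝ) : Prop :=
  ∀ x y : E d, f y - f x - (inner ℝ (gradient f x) (y - x) : ℝ) ≤ L / 2 * ‖y - x‖ ^ 2

/-- `m`-strong convexity of a function on `ℝ^d`. -/
def StrongConvex {d : ℕ} (m : ℝ) (f : E d → ℝ) : Prop :=
  ∀ x y : E d, m / 2 * ‖y - x‖ ^ 2 ≤ f y - f x - (inner ℝ (gradient f x) (y - x) : ℝ)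

/-- Density of the isotropic Gaussian `N(m, σ² I_d)` on `ℝ^d`. -/
def gaussDens {d : ℕ} (m : E d) (σ2 : ℝ) (x : E d) : ℝ :=
  (2 * Real.pi * σ2) ^ (-(d : ℝ) / 2) * Real.exp (-‖x - m‖ ^ 2 / (2 * σ2))

/-- The isotropic Gaussian measure `N(m, σ² I_d)` on `ℝ^d`. -/
def gaussE {d : ℕ} (m : E d) (σ2 : ℝ) : Measure (E d) :=
  volume.withDensity fun x => ENNReal.ofReal (gaussDens m σ2 x)

/-- Reference measure (counting ⊗ Lebesgue) on `[T] × ℝ^d`. -/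
def base2 (T d : ℕ) : Measure (Fin T × E d) := Measure.count.prod volume

/-- Reference measure (counting ⊗ counting ⊗ Lebesgue) on `[T] × [K] × ℝ^d`. -/
def base3 (T K d : ℕ) : Measure (Fin T × Fin K × E d) :=
  Measure.count.prod (Measure.count.prod volume)

/-- Acceptance probability for an `x`-move of simulated tempering with joint target
density `ρ(i,x)` and proposal densities `qd i x y`. -/
def accMove {T d : ℕ} (ρ : Fin T × E d → ℝ) (qd : Fin T → E d → E d → ℝ)
    (i : Fin T) (x y : E d) : ℝ :=
  min 1 (ρ (i, y) * qd i y x / (ρ (i, x) * qd i x y))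

/-- Acceptance probability for a temperature move of simulated tempering. -/
def accTemp {T d : ℕ} (ρ : Fin T × E d → ℝ) (q : Fin T → Fin T → ℝ)
    (i i' : Fin T) (x : E d) : ℝ :=
  min 1 (ρ (i', x) * q i' i / (ρ (i, x) * q i i'))

/-- The Metropolis–Hastings simulated tempering kernel on `[T] × ℝ^d` with target density
`ρ(i,x)`: with probability `α` propose a temperature move `i → i'` drawn from `q(i,·)`
(keeping `x` fixed), with probability `1-α` propose `x' ∼ Q_i(x,·)` (keeping `i` fixed),
accepting with the Metropolis--Hastings probabilities. -/
def stKernel {T d : ℕ} (α : ℝ) (q : Fin T → Fin T → ℝ)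
    (Qi : Fin T → E d → Measure (E d)) (qd : Fin T → E d → E d → ℝ)
    (ρ : Fin T × E d → ℝ) : Fin T × E d → Measure (Fin T × E d) :=
  fun p =>
    ENNReal.ofReal (1 - α) •
        (((Qi p.1 p.2).withDensity fun y => ENNReal.ofReal (accMove ρ qd p.1 p.2 y)).map
          fun y => (p.1, y))
      + (∑ i' : Fin T, if i' = p.1 then 0 else
          ENNReal.ofReal (α * q p.1 i' * accTemp ρ q p.1 i' p.2) • Measure.dirac (i', p.2))
      + ENNReal.ofReal
          (1 - (1 - α) * (∫ y, accMove ρ qd p.1 p.2 y ∂(Qi p.1 p.2))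
            - α * ∑ i' : Fin T, if i' = p.1 then 0 else q p.1 i' * accTemp ρ q p.1 i' p.2) •
          Measure.dirac p

/-- The second auxiliary Metropolis–Hastings chain on `[T] × [K] × ℝ^d` with target joint
density `pj(i,j,x)`: with probability `1/2` resample `j` from its conditional distribution
given `(i,x)`, with probability `1/2` apply the simulated tempering proposal to `(i,x)`
keeping `j` fixed, accepting with the Metropolis–Hastings probabilities. -/
def jointKernel {T K d : ℕ} (α : ℝ) (q : Fin T → Fin T → ℝ)
    (Qi : Fin T → E d → Measure (E d)) (qd : Fin T → E d → E d → ℝ)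
    (pj : Fin T → Fin K → E d → ℝ) :
    Fin T × Fin K × E d → Measure (Fin T × Fin K × E d) :=
  fun p =>
    (2 : ℝ≥0∞)⁻¹ • (∑ j' : Fin K,
        ENNReal.ofReal (pj p.1 j' p.2.2 / ∑ j'' : Fin K, pj p.1 j'' p.2.2) •
          Measure.dirac (p.1, j', p.2.2))
      + ENNReal.ofReal ((1 - α) / 2) •
          (((Qi p.1 p.2.2).withDensity fun y => ENNReal.ofReal
              (min 1 (pj p.1 p.2.1 y * qd p.1 y p.2.2 /
                (pj p.1 p.2.1 p.2.2 * qd p.1 p.2.2 y)))).map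
            fun y => (p.1, p.2.1, y))
      + (∑ i' : Fin T, if i' = p.1 then 0 else
          ENNReal.ofReal (α / 2 * q p.1 i' *
              min 1 (pj i' p.2.1 p.2.2 * q i' p.1 / (pj p.1 p.2.1 p.2.2 * q p.1 i'))) •
            Measure.dirac (i', p.2.1, p.2.2))
      + ENNReal.ofReal
          ((1 - α) / 2 * (1 - ∫ y, min 1 (pj p.1 p.2.1 y * qd p.1 y p.2.2 /
              (pj p.1 p.2.1 p.2.2 * qd p.1 p.2.2 y)) ∂(Qi p.1 p.2.2))
            + α / 2 * (1 - ∑ i' : Fin T, if i' = p.1 then 0 else q p.1 i' *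
                min 1 (pj i' p.2.1 p.2.2 * q i' p.1 / (pj p.1 p.2.1 p.2.2 * q p.1 i')))) •
          Measure.dirac p

/-- `t`-step distribution of the chain with kernel `P` started at `ν`. -/
def iterDist {Y : Type*} [MeasurableSpace Y] (P : Y → Measure Y) (ν : Measure Y) (t : ℕ) :
    Measure Y :=
  (fun μ => μ.bind P)^[t] ν

/-- The lazy version of a Markov kernel. -/
def lazy {Y : Type*} [MeasurableSpace Y] (P : Y → Measure Y) : Y → Measure Y :=
  fun x => (2 : ℝ≥0∞)⁻¹ • P x + (2 : ℝ≥0∞)⁻¹ • Measure.dirac x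

/-- KL divergence between two densities w.r.t. a reference measure. -/
def klDens {Y : Type*} [MeasurableSpace Y] (μ : Measure Y) (p q : Y → ℝ) : ℝ :=
  ∫ x, p x * Real.log (p x / q x) ∂μ

end ST

namespace STP

open MeasureTheory Real
open scoped ENNReal

variable {d : ℕ}

local notation "E" => EuclideanSpace ℝ (Fin d)

lemma measurable_coord (j : Fin d) : Measurable fun x : E => x j :=
  (measurable_pi_apply j).comp (WithLp.measurable_ofLp 2 _)

lemma finrank_E : (Module.finrank ℝ (EuclideanSpace ℝ (Fin d)) : ℝ) = d := by
  rw [finrank_euclideanSpace_fin]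

lemma integrable_gauss0 {a : ℝ} (ha : 0 < a) :
    Integrable (fun x : E => exp (-a * ‖x‖ ^ 2)) := by
  have h1 := (GaussianFourier.integrable_cexp_neg_mul_sq_norm_add
    (b := (a : ℂ)) (by simpa using ha) 0 (0 : E)).norm
  convert h1 using 2 with x
  rw [Complex.norm_exp]
  norm_num
  norm_cast
  exact Or.inl rfl

lemma integrable_gauss {a : ℝ} (ha : 0 < a) (m : E) :
    Integrable (fun x : E => exp (-a * ‖x - m‖ ^ 2)) :=
  (integrable_gauss0 ha).comp_sub_right m

lemma integral_gauss {a : ℝ} (ha : 0 < a) (m : E) :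
    ∫ x : E, exp (-a * ‖x - m‖ ^ 2) = (π / a) ^ ((d : ℝ) / 2) := by
  rw [integral_sub_right_eq_self (fun x : E => exp (-a * ‖x‖ ^ 2)) m,
    GaussianFourier.integral_rexp_neg_mul_sq_norm ha, finrank_E]

lemma complete_sq {a b : ℝ} (ha : 0 < a) (hb : 0 < b) (u v x : E) :
    a * ‖x - u‖ ^ 2 + b * ‖x - v‖ ^ 2 =
      (a + b) * ‖x - (a + b)⁻¹ • (a • u + b • v)‖ ^ 2 + a * b / (a + b) * ‖u - v‖ ^ 2 := by
  have hab : a + b ≠ 0 := by positivity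
  have h1 : ∀ y z : E, ‖y - z‖ ^ 2 = ‖y‖ ^ 2 - 2 * inner ℝ y z + ‖z‖ ^ 2 := fun y z =>
    norm_sub_sq_real y z
  have h2 : ‖(a + b)⁻¹ • (a • u + b • v)‖ ^ 2
      = (a + b)⁻¹ ^ 2 * ‖a • u + b • v‖ ^ 2 := by
    rw [norm_smul]; simp [mul_pow, sq_abs]
  have h3 : ‖a • u + b • v‖ ^ 2 =
      a ^ 2 * ‖u‖ ^ 2 + 2 * (a * b * inner ℝ u v) + b ^ 2 * ‖v‖ ^ 2 := by
    rw [@norm_add_sq_real, norm_smul, norm_smul, real_inner_smul_left, real_inner_smul_right]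
    simp [mul_pow, sq_abs]; ring
  have h4 : (inner ℝ x ((a + b)⁻¹ • (a • u + b • v)) : ℝ)
      = (a + b)⁻¹ * (a * inner ℝ x u + b * inner ℝ x v) := by
    rw [real_inner_smul_right, inner_add_right, real_inner_smul_right, real_inner_smul_right]
  rw [h1, h1, h1, h1, h2, h3, h4]
  field_simp
  ring

lemma two_gauss_mul {a b : ℝ} (ha : 0 < a) (hb : 0 < b) (u v : E) (x : E) :
    exp (-a * ‖x - u‖ ^ 2) * exp (-b * ‖x - v‖ ^ 2) =
      exp (-(a * b / (a + b)) * ‖u - v‖ ^ 2) *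
        exp (-(a + b) * ‖x - (a + b)⁻¹ • (a • u + b • v)‖ ^ 2) := by
  rw [← Real.exp_add, ← Real.exp_add]
  congr 1
  linear_combination (-1 : ℝ) * complete_sq ha hb u v x

lemma integrable_two_gauss {a b : ℝ} (ha : 0 < a) (hb : 0 < b) (u v : E) :
    Integrable (fun x : E => exp (-a * ‖x - u‖ ^ 2) * exp (-b * ‖x - v‖ ^ 2)) := by
  simp only [fun x => two_gauss_mul ha hb u v x]
  exact (integrable_gauss (by positivity) _).const_mul _

lemma integral_two_gauss {a b : ℝ} (ha : 0 < a) (hb : 0 < b) (u v : E) :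
    ∫ x : E, exp (-a * ‖x - u‖ ^ 2) * exp (-b * ‖x - v‖ ^ 2) =
      (π / (a + b)) ^ ((d : ℝ) / 2) * exp (-(a * b / (a + b)) * ‖u - v‖ ^ 2) := by
  simp only [fun x => two_gauss_mul ha hb u v x]
  rw [integral_const_mul, integral_gauss (by positivity), mul_comm]

lemma count_prod_eq {T : ℕ} :
    (Measure.count.prod (volume : Measure E) : Measure (Fin T × E)) =
      Measure.sum (fun i : Fin T => Measure.map (Prod.mk i) volume) := by
  rw [show (Measure.count : Measure (Fin T)) = Measure.sum Measure.dirac from rfl,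
    Measure.prod_sum_left]
  congr 1
  ext i : 1
  exact Measure.dirac_prod i

lemma lintegral_count_prod {T : ℕ} (f : Fin T × E → ℝ≥0∞) (hf : Measurable f) :
    ∫⁻ p, f p ∂(Measure.count.prod (volume : Measure E)) = ∑ i : Fin T, ∫⁻ x, f (i, x) := by
  rw [count_prod_eq, lintegral_sum_measure, tsum_fintype]
  exact Finset.sum_congr rfl fun i _ => lintegral_map hf measurable_prodMk_left

lemma measurable_pair {T : ℕ} {γ : Type*} [MeasurableSpace γ] (f : Fin T × E → γ)
    (hf : ∀ i, Measurable fun x => f (i, x)) : Measurable f := by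
  have : f = (fun q : E × Fin T => f (q.2, q.1)) ∘ Prod.swap := rfl
  rw [this]
  exact (measurable_from_prod_countable_left fun i => hf i).comp measurable_swap

lemma neg_apply (x : E) (j : Fin d) : (-x) j = -(x j) := rfl

lemma halfspace_lintegral {f : E → ℝ≥0∞} (hf : Measurable f) (hsym : ∀ x, f (-x) = f x)
    (j : Fin d) :
    ∫⁻ x in {x : E | x j < 0}, f x = ∫⁻ x in {x : E | 0 < x j}, f x := by
  conv_rhs => rw [← Measure.map_neg_eq_self (volume : Measure E)]
  rw [setLIntegral_map (measurableSet_lt measurable_const (measurable_coord j)) hf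
    measurable_neg]
  have hpre : (Neg.neg ⁻¹' {x : E | 0 < x j} : Set E) = {x : E | x j < 0} := by
    ext x
    simp [neg_apply, neg_pos]
  rw [hpre]
  exact lintegral_congr fun x => (hsym x).symm

lemma hyperplane_null (j : Fin d) : (volume : Measure E) {x : E | x j = 0} = 0 := by
  have hm := EuclideanSpace.volume_preserving_symm_measurableEquiv_toLp (Fin d)
  have hset : {x : E | x j = 0} =
      (MeasurableEquiv.toLp 2 (Fin d → ℝ)).symm ⁻¹' {f : Fin d → ℝ | f j = 0} := rfl
  have hms : MeasurableSet {f : Fin d → ℝ | f j = 0} :=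
    measurable_pi_apply j (measurableSet_singleton 0)
  rw [hset, hm.measure_preimage hms.nullMeasurableSet, volume_pi]
  exact Measure.pi_hyperplane _ j 0

lemma lintegral_halves {f : E → ℝ≥0∞} (hf : Measurable f) (hsym : ∀ x, f (-x) = f x)
    (j : Fin d) :
    ∫⁻ x in {x : E | x j < 0}, f x = (∫⁻ x, f x) / 2 := by
  have hhalf := halfspace_lintegral hf hsym j
  have hB : MeasurableSet {x : E | x j < 0} :=
    measurableSet_lt (measurable_coord j) measurable_const
  have hcompl : ({x : E | x j < 0}ᶜ : Set E) =ᵐ[volume] {x : E | 0 < x j} := by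
    refine (MeasureTheory.ae_eq_set).2 ⟨?_, ?_⟩
    · refine measure_mono_null ?_ (hyperplane_null j)
      intro x hx
      simp only [Set.mem_diff, Set.mem_compl_iff, Set.mem_setOf_eq, not_lt] at hx
      exact le_antisymm hx.2 hx.1
    · refine measure_mono_null ?_ (hyperplane_null j)
      intro x hx
      simp only [Set.mem_diff, Set.mem_compl_iff, Set.mem_setOf_eq, not_not, not_lt] at hx
      linarith [hx.1, hx.2]
  have htot : (∫⁻ x in {x : E | x j < 0}, f x) + ∫⁻ x in {x : E | x j < 0}ᶜ, f x = ∫⁻ x, f x :=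
    lintegral_add_compl f hB
  rw [setLIntegral_congr hcompl, ← hhalf] at htot
  rw [← htot, ← two_mul, mul_comm, mul_div_assoc,
    ENNReal.div_self two_ne_zero ENNReal.ofNat_ne_top, mul_one]

lemma min_one_le_rpow_half {t : ℝ} (ht : 0 ≤ t) : min 1 t ≤ t ^ ((1 : ℝ) / 2) := by
  rcases le_total t 1 with h | h
  · rcases eq_or_lt_of_le ht with rfl | ht'
    · simp
    · calc min 1 t ≤ t := min_le_right _ _
        _ = t ^ (1 : ℝ) := (Real.rpow_one t).symm
        _ ≤ t ^ ((1 : ℝ) / 2) := Real.rpow_le_rpow_of_exponent_ge ht' h (by norm_num)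
  · calc min 1 t ≤ 1 := min_le_left _ _
      _ ≤ t ^ ((1 : ℝ) / 2) := Real.one_le_rpow h (by norm_num)

noncomputable def cc (d : ℕ) : ℝ := (2 * Real.pi) ^ (-(d : ℝ) / 2)

lemma cc_pos (d : ℕ) : 0 < cc d := Real.rpow_pos_of_pos (by positivity) _

noncomputable def Cdc (d : ℕ) (h b : ℝ) : ℝ :=
  (2 * Real.pi * (2 * h / b)) ^ (-(d : ℝ) / 2) *
    (Real.pi / (b / 4 + b / (4 * h))) ^ ((d : ℝ) / 2)

noncomputable def Ppc (d : ℕ) (h b : ℝ) : ℝ :=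
  (Real.pi / (b / 4 + b / (4 * (1 + h)))) ^ ((d : ℝ) / 2)

noncomputable def Pzc (d : ℕ) (b : ℝ) : ℝ := (Real.pi / (b / 2)) ^ ((d : ℝ) / 2)

noncomputable def kpc (d : ℕ) (h : ℝ) : ℝ := (2 / (2 + h)) ^ ((d : ℝ) / 2)

lemma Cdc_pos {h b : ℝ} (hh : 0 < h) (hb : 0 < b) : 0 < Cdc d h b := by
  unfold Cdc
  have h1 : (0:ℝ) < 2 * Real.pi * (2 * h / b) := by
    have := Real.pi_pos
    positivity
  have h2 : (0:ℝ) < Real.pi / (b / 4 + b / (4 * h)) := by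
    have := Real.pi_pos
    positivity
  exact mul_pos (Real.rpow_pos_of_pos h1 _) (Real.rpow_pos_of_pos h2 _)

lemma Ppc_pos {h b : ℝ} (hh : 0 < h) (hb : 0 < b) : 0 < Ppc d h b := by
  unfold Ppc
  have h2 : (0:ℝ) < Real.pi / (b / 4 + b / (4 * (1 + h))) := by
    have := Real.pi_pos
    positivity
  exact Real.rpow_pos_of_pos h2 _

lemma Pzc_pos {b : ℝ} (hb : 0 < b) : 0 < Pzc d b := by
  unfold Pzc
  have h2 : (0:ℝ) < Real.pi / (b / 2) := by
    have := Real.pi_pos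
    positivity
  exact Real.rpow_pos_of_pos h2 _

lemma kpc_pos {h : ℝ} (hh : 0 < h) : 0 < kpc d h := by
  unfold kpc
  have : (0:ℝ) < 2 / (2 + h) := by positivity
  exact Real.rpow_pos_of_pos this _

lemma key_const {h b : ℝ} (hh : 0 < h) (hb : 0 < b) :
    Cdc d h b * Ppc d h b = kpc d h * Pzc d b := by
  unfold Cdc Ppc kpc Pzc
  have hπ := Real.pi_pos
  have h1 : (0:ℝ) < 2 * Real.pi * (2 * h / b) := by positivity
  have h2 : (0:ℝ) < Real.pi / (b / 4 + b / (4 * h)) := by positivity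
  have h3 : (0:ℝ) < Real.pi / (b / 4 + b / (4 * (1 + h))) := by positivity
  have h4 : (0:ℝ) < 2 / (2 + h) := by positivity
  have h5 : (0:ℝ) < Real.pi / (b / 2) := by positivity
  rw [show -(d:ℝ)/2 = -((d:ℝ)/2) by ring, Real.rpow_neg h1.le, ← Real.inv_rpow h1.le,
    ← Real.mul_rpow (by positivity) h2.le, ← Real.mul_rpow (by positivity) h3.le,
    ← Real.mul_rpow h4.le h5.le]
  congr 1
  field_simp
  ring

lemma cont_sqnorm (m : E) : Continuous fun x : E => ‖x - m‖ ^ 2 :=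
  ((continuous_id.sub continuous_const).norm.pow 2)

lemma cont_expHalf (m : E) : Continuous fun x : E => Real.exp (-‖x - m‖ ^ 2 / 2) :=
  Real.continuous_exp.comp (((cont_sqnorm m).neg).div_const 2)

lemma cont_expMul (a : ℝ) (m : E) : Continuous fun x : E => Real.exp (-a * ‖x - m‖ ^ 2) :=
  Real.continuous_exp.comp (continuous_const.mul (cont_sqnorm m))

lemma cont_gaussDens (m : E) (σ2 : ℝ) : Continuous (ST.gaussDens m σ2) := by
  unfold ST.gaussDens
  exact continuous_const.mul (Real.continuous_exp.comp (((cont_sqnorm m).neg).div_const _))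

lemma gaussDens_pos {σ2 : ℝ} (hσ : 0 < σ2) (m x : E) : 0 < ST.gaussDens m σ2 x := by
  unfold ST.gaussDens
  exact mul_pos (Real.rpow_pos_of_pos (mul_pos (by positivity) hσ) _) (Real.exp_pos _)

end STP

set_option maxHeartbeats 1600000 in
/-- Necessary condition on `β₁`: for the symmetric two-component Gaussian
mixture target with modes `±(D,0,…,0)` and RWM proposals of step size `h/β_i`, the
s-conductance of simulated tempering satisfies
`Φ_s(P*) ≤ (4/(1−2s))·(2/(2+h))^{d/2}·exp(−β₁D²/(2+h))`. -/
theorem stmt15 (d T : ℕ) (hd : 0 < d) (hT : 0 < T)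
    (D : ℝ) (hD : 0 < D)
    (μ1 μ2 : ST.E d)
    (hμ1 : μ1 = EuclideanSpace.single (⟨0, hd⟩ : Fin d) D) (hμ2 : μ2 = -μ1)
    (pun : ST.E d → ℝ)
    (hpun : ∀ x, pun x = 1 / 2 * (2 * Real.pi) ^ (-(d : ℝ) / 2) *
      (Real.exp (-‖x - μ1‖ ^ 2 / 2) + Real.exp (-‖x - μ2‖ ^ 2 / 2)))
    (β : Fin T → ℝ) (hβpos : ∀ i, 0 < β i) (hβmono : Monotone β)
    (hβlast : β ⟨T - 1, Nat.sub_lt hT one_pos⟩ = 1)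
    (r : Fin T → ℝ) (hr : ∀ i, 0 < r i) (hrsum : ∑ i, r i = 1)
    (α : ℝ) (hα0 : 0 < α) (hα1 : α < 1)
    (q : Fin T → Fin T → ℝ) (hqnn : ∀ i i', 0 ≤ q i i') (hqrow : ∀ i, ∑ i', q i i' = 1)
    (h : ℝ) (hh : 0 < h)
    (Qi : Fin T → ST.E d → Measure (ST.E d))
    (qd : Fin T → ST.E d → ST.E d → ℝ)
    (hQi : ∀ i x, Qi i x = ST.gaussE x (2 * h / β i))
    (hqd : ∀ i x y, qd i x y = ST.gaussDens x (2 * h / β i) y)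
    (Zs : Fin T → ℝ) (hZs : ∀ i, Zs i = ∫ x : ST.E d, pun x ^ β i)
    (ρstar : Fin T × ST.E d → ℝ)
    (hρstar : ∀ p, ρstar p = r p.1 * pun p.2 ^ β p.1 / Zs p.1)
    (PiStar : Measure (Fin T × ST.E d))
    (hPiStar : PiStar = (ST.base2 T d).withDensity fun p => ENNReal.ofReal (ρstar p))
    (Pstar : Fin T × ST.E d → Measure (Fin T × ST.E d))
    (hPstar : Pstar = ST.stKernel α q Qi qd ρstar)
    (s : ℝ) (hs0 : 0 ≤ s) (hs : s < 1 / 2) :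
    ST.sCond PiStar Pstar s ≤
      4 / (1 - 2 * s) * (2 / (2 + h)) ^ ((d : ℝ) / 2) *
        Real.exp (-(β ⟨0, hT⟩ * D ^ 2 / (2 + h))) := by
  classical
  set j : Fin d := ⟨0, hd⟩ with hjdef
  set i0 : Fin T := ⟨0, hT⟩ with hi0def
  have hπ := Real.pi_pos
  have hcc := STP.cc_pos d
  have hccβ : ∀ b' : ℝ, 0 < STP.cc d ^ b' := fun b' => Real.rpow_pos_of_pos hcc _
  have h1h : (0:ℝ) < 1 + h := by linarith
  have h2h : (0:ℝ) < 2 + h := by linarith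
  have hβle1 : ∀ i, β i ≤ 1 := by
    intro i
    have hle : i ≤ (⟨T - 1, Nat.sub_lt hT one_pos⟩ : Fin T) := by
      rw [Fin.le_def]
      exact Nat.le_sub_one_of_lt i.isLt
    calc β i ≤ β ⟨T - 1, Nat.sub_lt hT one_pos⟩ := hβmono hle
      _ = 1 := hβlast
  have hβ0le : ∀ i, β i0 ≤ β i := fun i => hβmono (by rw [Fin.le_def]; exact Nat.zero_le _)
  have hpun' : ∀ x, pun x = 1 / 2 * STP.cc d *
      (Real.exp (-‖x - μ1‖ ^ 2 / 2) + Real.exp (-‖x - μ2‖ ^ 2 / 2)) := hpun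
  have pun_pos : ∀ x, 0 < pun x := by
    intro x
    rw [hpun' x]
    have h1 := Real.exp_pos (-‖x - μ1‖ ^ 2 / 2)
    have h2 := Real.exp_pos (-‖x - μ2‖ ^ 2 / 2)
    have h3 := mul_pos hcc (add_pos h1 h2)
    linarith
  have pun_cont : Continuous pun := by
    have hrw : pun = fun x => 1 / 2 * STP.cc d *
        (Real.exp (-‖x - μ1‖ ^ 2 / 2) + Real.exp (-‖x - μ2‖ ^ 2 / 2)) := funext hpun'
    rw [hrw]
    exact continuous_const.mul ((STP.cont_expHalf μ1).add (STP.cont_expHalf μ2))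
  -- geometry
  have hD2 : ‖μ1‖ ^ 2 = D ^ 2 := by
    rw [hμ1, EuclideanSpace.norm_single, Real.norm_eq_abs, sq_abs]
  have hinner : ∀ x : ST.E d, (inner ℝ x μ1 : ℝ) = D * x j := by
    intro x
    rw [hμ1]
    simp [EuclideanSpace.inner_single_right, mul_comm]
  have hn1 : ∀ x : ST.E d, ‖x - μ1‖ ^ 2 = ‖x‖ ^ 2 - 2 * (D * x j) + D ^ 2 := by
    intro x; rw [norm_sub_sq_real, hinner, hD2]
  have hn2 : ∀ x : ST.E d, ‖x - μ2‖ ^ 2 = ‖x‖ ^ 2 + 2 * (D * x j) + D ^ 2 := by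
    intro x; rw [hμ2, sub_neg_eq_add, norm_add_sq_real, hinner, hD2]
  have hdiff2 : ‖μ2 - μ1‖ ^ 2 = 4 * D ^ 2 := by
    have hrw : μ2 - μ1 = -(μ1 + μ1) := by rw [hμ2]; abel
    rw [hrw, norm_neg, norm_add_sq_real, real_inner_self_eq_norm_sq, hD2]
    ring
  -- pointwise bounds on pun
  have up2 : ∀ y : ST.E d, 0 ≤ y j → pun y ≤ STP.cc d * Real.exp (-‖y - μ1‖ ^ 2 / 2) := by
    intro y hy
    have hee : Real.exp (-‖y - μ2‖ ^ 2 / 2) ≤ Real.exp (-‖y - μ1‖ ^ 2 / 2) := by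
      apply Real.exp_le_exp.2
      have h1 := hn1 y; have h2 := hn2 y
      nlinarith [mul_nonneg hD.le hy]
    rw [hpun' y]
    linarith [mul_le_mul_of_nonneg_left hee hcc.le]
  have up1 : ∀ x : ST.E d, x j ≤ 0 → pun x ≤ STP.cc d * Real.exp (-‖x - μ2‖ ^ 2 / 2) := by
    intro x hx
    have hee : Real.exp (-‖x - μ1‖ ^ 2 / 2) ≤ Real.exp (-‖x - μ2‖ ^ 2 / 2) := by
      apply Real.exp_le_exp.2
      have h1 := hn1 x; have h2 := hn2 x
      nlinarith [mul_nonneg hD.le (neg_nonneg.2 hx)]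
    rw [hpun' x]
    linarith [mul_le_mul_of_nonneg_left hee hcc.le]
  have plow : ∀ x : ST.E d, 1 / 2 * STP.cc d * Real.exp (-‖x - μ1‖ ^ 2 / 2) ≤ pun x := by
    intro x
    rw [hpun' x]
    linarith [mul_nonneg hcc.le (Real.exp_nonneg (-‖x - μ2‖ ^ 2 / 2))]
  have psym : ∀ x : ST.E d, pun (-x) = pun x := by
    intro x
    rw [hpun' x, hpun' (-x)]
    have e1 : ‖-x - μ1‖ = ‖x - μ2‖ := by
      rw [hμ2, sub_neg_eq_add, show -x - μ1 = -(x + μ1) by abel, norm_neg]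
    have e2 : ‖-x - μ2‖ = ‖x - μ1‖ := by
      rw [hμ2, sub_neg_eq_add, show -x + μ1 = -(x - μ1) by abel, norm_neg]
    rw [e1, e2]; ring
  -- sets
  set B : Set (ST.E d) := {x : ST.E d | x j < 0} with hBdef
  have hBm : MeasurableSet B :=
    measurableSet_lt (STP.measurable_coord j) measurable_const
  set A : Set (Fin T × ST.E d) := Prod.snd ⁻¹' B with hAdef
  have hAm : MeasurableSet A := hBm.preimage measurable_snd
  have hAcm : MeasurableSet Aᶜ := hAm.compl
  -- integrability of pun^β
  have hcontβ : ∀ i : Fin T, Continuous fun x => pun x ^ β i := fun i =>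
    pun_cont.rpow_const fun x => Or.inl (pun_pos x).ne'
  have hexpβ : ∀ (i : Fin T) (m : ST.E d) (x : ST.E d),
      (STP.cc d * Real.exp (-‖x - m‖ ^ 2 / 2)) ^ β i
        = STP.cc d ^ β i * Real.exp (-(β i / 2) * ‖x - m‖ ^ 2) := by
    intro i m x
    rw [Real.mul_rpow hcc.le (Real.exp_nonneg _), ← Real.exp_mul]
    congr 2
    ring
  have punβ_int : ∀ i : Fin T, Integrable (fun x => pun x ^ β i) := by
    intro i
    have hβ2 : (0:ℝ) < β i / 2 := by linarith [hβpos i]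
    have hbound : ∀ x : ST.E d, ‖pun x ^ β i‖ ≤
        STP.cc d ^ β i * Real.exp (-(β i / 2) * ‖x - μ1‖ ^ 2)
          + STP.cc d ^ β i * Real.exp (-(β i / 2) * ‖x - μ2‖ ^ 2) := by
      intro x
      rw [Real.norm_eq_abs, abs_of_nonneg (Real.rpow_nonneg (pun_pos x).le _)]
      rcases le_total (Real.exp (-‖x - μ1‖ ^ 2 / 2)) (Real.exp (-‖x - μ2‖ ^ 2 / 2)) with hle | hle
      · have h1 : pun x ≤ STP.cc d * Real.exp (-‖x - μ2‖ ^ 2 / 2) := by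
          rw [hpun' x]; linarith [mul_le_mul_of_nonneg_left hle hcc.le]
        have h2 := Real.rpow_le_rpow (pun_pos x).le h1 (hβpos i).le
        rw [hexpβ i μ2 x] at h2
        have h3 : 0 ≤ STP.cc d ^ β i * Real.exp (-(β i / 2) * ‖x - μ1‖ ^ 2) :=
          mul_nonneg (hccβ _).le (Real.exp_nonneg _)
        linarith
      · have h1 : pun x ≤ STP.cc d * Real.exp (-‖x - μ1‖ ^ 2 / 2) := by
          rw [hpun' x]; linarith [mul_le_mul_of_nonneg_left hle hcc.le]
        have h2 := Real.rpow_le_rpow (pun_pos x).le h1 (hβpos i).le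
        rw [hexpβ i μ1 x] at h2
        have h3 : 0 ≤ STP.cc d ^ β i * Real.exp (-(β i / 2) * ‖x - μ2‖ ^ 2) :=
          mul_nonneg (hccβ _).le (Real.exp_nonneg _)
        linarith
    have hint : Integrable (fun x : ST.E d =>
        STP.cc d ^ β i * Real.exp (-(β i / 2) * ‖x - μ1‖ ^ 2)
          + STP.cc d ^ β i * Real.exp (-(β i / 2) * ‖x - μ2‖ ^ 2)) :=
      ((STP.integrable_gauss hβ2 μ1).const_mul _).add
        ((STP.integrable_gauss hβ2 μ2).const_mul _)
    exact hint.mono' (hcontβ i).aestronglyMeasurable (ae_of_all _ hbound)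
  -- lower bound on Zs
  have hZl : ∀ i : Fin T, (1/2 : ℝ) ^ β i * (STP.cc d ^ β i * STP.Pzc d (β i)) ≤ Zs i := by
    intro i
    have hβ2 : (0:ℝ) < β i / 2 := by linarith [hβpos i]
    rw [hZs i]
    have hlow : ∀ x : ST.E d,
        (1/2 : ℝ) ^ β i * STP.cc d ^ β i * Real.exp (-(β i / 2) * ‖x - μ1‖ ^ 2)
          ≤ pun x ^ β i := by
      intro x
      have h1 := Real.rpow_le_rpow
        (mul_nonneg (mul_nonneg (by norm_num) hcc.le) (Real.exp_nonneg _))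
        (plow x) (hβpos i).le
      rw [Real.mul_rpow (mul_nonneg (by norm_num) hcc.le) (Real.exp_nonneg _),
        Real.mul_rpow (by norm_num) hcc.le, ← Real.exp_mul] at h1
      calc (1/2 : ℝ) ^ β i * STP.cc d ^ β i * Real.exp (-(β i / 2) * ‖x - μ1‖ ^ 2)
          = (1/2 : ℝ) ^ β i * STP.cc d ^ β i * Real.exp (-‖x - μ1‖ ^ 2 / 2 * β i) := by
            congr 1; congr 1; ring
        _ ≤ pun x ^ β i := h1
    have hIlow : ∫ x : ST.E d,
        ((1/2 : ℝ) ^ β i * STP.cc d ^ β i) * Real.exp (-(β i / 2) * ‖x - μ1‖ ^ 2)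
          = (1/2 : ℝ) ^ β i * (STP.cc d ^ β i * STP.Pzc d (β i)) := by
      rw [integral_const_mul, STP.integral_gauss hβ2 μ1]
      simp only [STP.Pzc]
      ring
    calc (1/2 : ℝ) ^ β i * (STP.cc d ^ β i * STP.Pzc d (β i))
        = ∫ x : ST.E d, ((1/2 : ℝ) ^ β i * STP.cc d ^ β i) *
            Real.exp (-(β i / 2) * ‖x - μ1‖ ^ 2) := hIlow.symm
      _ ≤ ∫ x : ST.E d, pun x ^ β i := by
          apply integral_mono ((STP.integrable_gauss hβ2 μ1).const_mul _) (punβ_int i)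
          intro x
          exact hlow x
  have Zpos : ∀ i, 0 < Zs i := by
    intro i
    have h1 : (0:ℝ) < (1/2 : ℝ) ^ β i * (STP.cc d ^ β i * STP.Pzc d (β i)) :=
      mul_pos (Real.rpow_pos_of_pos (by norm_num) _)
        (mul_pos (hccβ _) (STP.Pzc_pos (hβpos i)))
    linarith [hZl i]
  have hρnn : ∀ p, 0 ≤ ρstar p := fun p => by
    rw [hρstar]
    exact div_nonneg (mul_nonneg (hr _).le (Real.rpow_nonneg (pun_pos _).le _)) (Zpos _).le
  have hρm : Measurable fun p : Fin T × ST.E d => ENNReal.ofReal (ρstar p) := by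
    have hρeq : ρstar = fun p : Fin T × ST.E d => r p.1 * pun p.2 ^ β p.1 / Zs p.1 :=
      funext hρstar
    rw [hρeq]
    apply Measurable.ennreal_ofReal
    apply STP.measurable_pair
    intro i
    show Measurable fun x : ST.E d => r i * pun x ^ β i / Zs i
    exact ((continuous_const.mul (hcontβ i)).div_const (Zs i)).measurable
  have hrρ : ∀ (i : Fin T) (x : ST.E d), ENNReal.ofReal (ρstar (i, x))
      = ENNReal.ofReal (r i / Zs i) * ENNReal.ofReal (pun x ^ β i) := by
    intro i x
    rw [← ENNReal.ofReal_mul (div_nonneg (hr i).le (Zpos i).le)]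
    congr 1
    rw [hρstar]
    ring
  -- half-space measure of pun^β
  have hhalfZ : ∀ i : Fin T,
      ∫⁻ x in B, ENNReal.ofReal (pun x ^ β i) = ENNReal.ofReal (Zs i) / 2 := by
    intro i
    have hfm : Measurable fun x : ST.E d => ENNReal.ofReal (pun x ^ β i) :=
      (hcontβ i).measurable.ennreal_ofReal
    rw [hBdef, STP.lintegral_halves hfm (fun x => by rw [psym x]) j]
    congr 1
    rw [hZs i]
    exact (MeasureTheory.ofReal_integral_eq_lintegral_ofReal (punβ_int i)
      (ae_of_all _ fun x => Real.rpow_nonneg (pun_pos x).le _)).symm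
  -- the measure of A
  have hPiA : PiStar A = 2⁻¹ := by
    rw [hPiStar, withDensity_apply _ hAm,
      show (ST.base2 T d) = Measure.count.prod volume from rfl,
      ← lintegral_indicator hAm,
      STP.lintegral_count_prod _ (hρm.indicator hAm)]
    have hterm : ∀ i : Fin T,
        (∫⁻ x, A.indicator (fun p => ENNReal.ofReal (ρstar p)) (i, x))
          = ENNReal.ofReal (r i) / 2 := by
      intro i
      have hind : (fun x : ST.E d => A.indicator (fun p => ENNReal.ofReal (ρstar p)) (i, x))
          = fun x => B.indicator (fun x => ENNReal.ofReal (ρstar (i, x))) x := by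
        funext x
        by_cases hx : x ∈ B
        · rw [Set.indicator_of_mem hx, Set.indicator_of_mem (show (i, x) ∈ A from hx)]
        · rw [Set.indicator_of_notMem hx,
            Set.indicator_of_notMem (show (i, x) ∉ A from hx)]
      rw [hind, lintegral_indicator hBm]
      calc ∫⁻ x in B, ENNReal.ofReal (ρstar (i, x))
          = ∫⁻ x in B, ENNReal.ofReal (r i / Zs i) * ENNReal.ofReal (pun x ^ β i) :=
            setLIntegral_congr_fun hBm (fun x _ => hrρ i x)
        _ = ENNReal.ofReal (r i / Zs i) * ∫⁻ x in B, ENNReal.ofReal (pun x ^ β i) :=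
            lintegral_const_mul' _ _ ENNReal.ofReal_ne_top
        _ = ENNReal.ofReal (r i / Zs i) * (ENNReal.ofReal (Zs i) / 2) := by rw [hhalfZ i]
        _ = ENNReal.ofReal (r i) / 2 := by
            rw [← mul_div_assoc, ← ENNReal.ofReal_mul (div_nonneg (hr i).le (Zpos i).le),
              div_mul_cancel₀ _ (Zpos i).ne']
    rw [Finset.sum_congr rfl fun i _ => hterm i]
    simp only [div_eq_mul_inv]
    rw [← Finset.sum_mul, ← ENNReal.ofReal_sum_of_nonneg (fun i _ => (hr i).le), hrsum,
      ENNReal.ofReal_one, one_mul]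
  have htR : (PiStar A).toReal = 1 / 2 := by
    rw [hPiA]
    simp
  -- kernel evaluation on Aᶜ
  have hσ2 : ∀ i : Fin T, (0:ℝ) < 2 * h / β i := fun i => div_pos (by linarith) (hβpos i)
  have hqdpos : ∀ (i : Fin T) (x y : ST.E d), 0 < qd i x y := by
    intro i x y
    rw [hqd]
    exact STP.gaussDens_pos (hσ2 i) x y
  have hqdsym : ∀ (i : Fin T) (x y : ST.E d), qd i y x = qd i x y := by
    intro i x y
    rw [hqd, hqd]
    unfold ST.gaussDens
    rw [norm_sub_rev]
  have hPsA : ∀ (i : Fin T) (x : ST.E d), x ∈ B →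
      Pstar (i, x) Aᶜ = ENNReal.ofReal (1 - α) *
        ∫⁻ y in Bᶜ, ENNReal.ofReal (ST.gaussDens x (2 * h / β i) y) *
          ENNReal.ofReal (ST.accMove ρstar qd i x y) ∂volume := by
    intro i x hx
    have hnotin : ((i, x) : Fin T × ST.E d) ∉ Aᶜ :=
      Set.notMem_compl_iff.2 (show ((i, x) : Fin T × ST.E d) ∈ A from hx)
    rw [hPstar]
    simp only [ST.stKernel]
    rw [Measure.add_apply, Measure.add_apply, Measure.smul_apply, Measure.smul_apply,
      Measure.finset_sum_apply]
    have hz1 : (Measure.dirac ((i, x) : Fin T × ST.E d)) Aᶜ = 0 := by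
      rw [Measure.dirac_apply' _ hAcm, Set.indicator_of_notMem hnotin]
    have hz2 : ∀ i' : Fin T, (if i' = i then (0 : Measure (Fin T × ST.E d)) else
        ENNReal.ofReal (α * q i i' * ST.accTemp ρstar q i i' x) •
          Measure.dirac ((i', x) : Fin T × ST.E d)) Aᶜ = 0 := by
      intro i'
      split_ifs
      · simp
      · rw [Measure.smul_apply, Measure.dirac_apply' _ hAcm,
          Set.indicator_of_notMem
            (Set.notMem_compl_iff.2 (show ((i', x) : Fin T × ST.E d) ∈ A from hx)), smul_zero]
    rw [Finset.sum_eq_zero fun i' _ => hz2 i', hz1, smul_zero, add_zero, add_zero]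
    rw [Measure.map_apply
      (measurable_prodMk_left : Measurable fun y : ST.E d => ((i, y) : Fin T × ST.E d)) hAcm]
    rw [show ((fun y : ST.E d => ((i, y) : Fin T × ST.E d)) ⁻¹' Aᶜ) = Bᶜ from rfl]
    rw [withDensity_apply _ hBm.compl, hQi i x]
    simp only [ST.gaussE]
    rw [restrict_withDensity hBm.compl,
      lintegral_withDensity_eq_lintegral_mul_non_measurable _
        ((STP.cont_gaussDens x (2 * h / β i)).measurable.ennreal_ofReal)
        (ae_of_all _ fun y => ENNReal.ofReal_lt_top), smul_eq_mul]
    rfl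
  -- acceptance ratio bound
  have haccle : ∀ (i : Fin T) (x y : ST.E d), 0 ≤ y j →
      ST.accMove ρstar qd i x y ≤
        STP.cc d ^ (β i / 2) * pun x ^ (-(β i / 2)) *
          Real.exp (-(β i / 4) * ‖y - μ1‖ ^ 2) := by
    intro i x y hy
    have hrZ : (0:ℝ) < r i / Zs i := div_pos (hr i) (Zpos i)
    have hrat : ρstar (i, y) * qd i y x / (ρstar (i, x) * qd i x y)
        = pun y ^ β i / pun x ^ β i := by
      rw [hqdsym i x y, hρstar, hρstar]
      simp only
      rw [mul_div_mul_right _ _ (hqdpos i x y).ne',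
        show r i * pun y ^ β i / Zs i = (r i / Zs i) * pun y ^ β i from by ring,
        show r i * pun x ^ β i / Zs i = (r i / Zs i) * pun x ^ β i from by ring,
        mul_div_mul_left _ _ hrZ.ne']
    rw [ST.accMove, hrat]
    have h0 : 0 ≤ pun y ^ β i / pun x ^ β i :=
      div_nonneg (Real.rpow_nonneg (pun_pos y).le _) (Real.rpow_nonneg (pun_pos x).le _)
    refine le_trans (STP.min_one_le_rpow_half h0) ?_
    rw [Real.div_rpow (Real.rpow_nonneg (pun_pos y).le _) (Real.rpow_nonneg (pun_pos x).le _),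
      ← Real.rpow_mul (pun_pos y).le, ← Real.rpow_mul (pun_pos x).le,
      show β i * (1 / 2) = β i / 2 from by ring, div_eq_mul_inv,
      ← Real.rpow_neg (pun_pos x).le]
    have h2 : pun y ^ (β i / 2) ≤
        STP.cc d ^ (β i / 2) * Real.exp (-(β i / 4) * ‖y - μ1‖ ^ 2) := by
      have h3 := Real.rpow_le_rpow (pun_pos y).le (up2 y hy)
        (by linarith [hβpos i] : (0:ℝ) ≤ β i / 2)
      rw [Real.mul_rpow hcc.le (Real.exp_nonneg _), ← Real.exp_mul] at h3
      calc pun y ^ (β i / 2)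
          ≤ STP.cc d ^ (β i / 2) * Real.exp (-‖y - μ1‖ ^ 2 / 2 * (β i / 2)) := h3
        _ = STP.cc d ^ (β i / 2) * Real.exp (-(β i / 4) * ‖y - μ1‖ ^ 2) := by
            congr 1; congr 1; ring
    calc pun y ^ (β i / 2) * pun x ^ (-(β i / 2))
        ≤ (STP.cc d ^ (β i / 2) * Real.exp (-(β i / 4) * ‖y - μ1‖ ^ 2)) *
            pun x ^ (-(β i / 2)) :=
          mul_le_mul_of_nonneg_right h2 (Real.rpow_nonneg (pun_pos x).le _)
      _ = STP.cc d ^ (β i / 2) * pun x ^ (-(β i / 2)) *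
            Real.exp (-(β i / 4) * ‖y - μ1‖ ^ 2) := by ring
  -- inner integral bound
  have hψle : ∀ (i : Fin T) (x : ST.E d), x ∈ B →
      (∫⁻ y in Bᶜ, ENNReal.ofReal (ST.gaussDens x (2 * h / β i) y) *
          ENNReal.ofReal (ST.accMove ρstar qd i x y) ∂volume)
        ≤ ENNReal.ofReal ((STP.cc d ^ (β i / 2) * pun x ^ (-(β i / 2))) *
            (STP.Cdc d h (β i) * Real.exp (-(β i / (4 * (1 + h))) * ‖x - μ1‖ ^ 2))) := by
    intro i x _
    have ha4 : (0:ℝ) < β i / 4 := by linarith [hβpos i]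
    have hb4 : (0:ℝ) < β i / (4 * h) := div_pos (hβpos i) (by linarith)
    have hgdnn : ∀ y, 0 ≤ ST.gaussDens x (2 * h / β i) y :=
      fun y => (STP.gaussDens_pos (hσ2 i) x y).le
    set ψ : ST.E d → ℝ := fun y => (STP.cc d ^ (β i / 2) * pun x ^ (-(β i / 2))) *
        (Real.exp (-(β i / 4) * ‖y - μ1‖ ^ 2) * ST.gaussDens x (2 * h / β i) y) with hψdef
    have hψeq : ψ = fun y =>
        ((STP.cc d ^ (β i / 2) * pun x ^ (-(β i / 2))) *
            (2 * Real.pi * (2 * h / β i)) ^ (-(d:ℝ) / 2)) *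
          (Real.exp (-(β i / 4) * ‖y - μ1‖ ^ 2) *
            Real.exp (-(β i / (4 * h)) * ‖y - x‖ ^ 2)) := by
      funext y
      simp only [hψdef]
      unfold ST.gaussDens
      rw [show -‖y - x‖ ^ 2 / (2 * (2 * h / β i)) = -(β i / (4 * h)) * ‖y - x‖ ^ 2 from by
        field_simp
        ring]
      ring
    have hψint : Integrable ψ := by
      rw [hψeq]
      exact (STP.integrable_two_gauss ha4 hb4 μ1 x).const_mul _
    have hψnn : ∀ y, 0 ≤ ψ y := by
      intro y
      simp only [hψdef]
      exact mul_nonneg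
        (mul_nonneg (hccβ _).le (Real.rpow_nonneg (pun_pos x).le _))
        (mul_nonneg (Real.exp_nonneg _) (hgdnn y))
    have hψcont : Continuous ψ := by
      simp only [hψdef]
      exact continuous_const.mul
        ((STP.cont_expMul (β i / 4) μ1).mul (STP.cont_gaussDens x _))
    have hψval : ∫ y, ψ y = (STP.cc d ^ (β i / 2) * pun x ^ (-(β i / 2))) *
        (STP.Cdc d h (β i) * Real.exp (-(β i / (4 * (1 + h))) * ‖x - μ1‖ ^ 2)) := by
      have hsc : β i / 4 * (β i / (4 * h)) / (β i / 4 + β i / (4 * h))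
          = β i / (4 * (1 + h)) := by
        have hne : β i / 4 + β i / (4 * h) ≠ 0 := ne_of_gt (add_pos ha4 hb4)
        have h1ne : (1:ℝ) + h ≠ 0 := ne_of_gt h1h
        have hβne : β i ≠ 0 := (hβpos i).ne'
        rw [div_eq_iff hne]
        field_simp
        ring
      simp only [hψeq]
      rw [integral_const_mul, STP.integral_two_gauss ha4 hb4 μ1 x,
        show ‖μ1 - x‖ = ‖x - μ1‖ from norm_sub_rev μ1 x, hsc]
      simp only [STP.Cdc]
      ring
    calc (∫⁻ y in Bᶜ, ENNReal.ofReal (ST.gaussDens x (2 * h / β i) y) *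
          ENNReal.ofReal (ST.accMove ρstar qd i x y) ∂volume)
        ≤ ∫⁻ y in Bᶜ, ENNReal.ofReal (ψ y) ∂volume := by
          apply setLIntegral_mono (hψcont.measurable.ennreal_ofReal)
          intro y hy
          have hy' : 0 ≤ y j := by
            simp only [hBdef, Set.mem_compl_iff, Set.mem_setOf_eq, not_lt] at hy
            exact hy
          rw [← ENNReal.ofReal_mul (hgdnn y)]
          apply ENNReal.ofReal_le_ofReal
          calc ST.gaussDens x (2 * h / β i) y * ST.accMove ρstar qd i x y
              ≤ ST.gaussDens x (2 * h / β i) y *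
                  (STP.cc d ^ (β i / 2) * pun x ^ (-(β i / 2)) *
                    Real.exp (-(β i / 4) * ‖y - μ1‖ ^ 2)) :=
                mul_le_mul_of_nonneg_left (haccle i x y hy') (hgdnn y)
            _ = ψ y := by simp only [hψdef]; ring
      _ ≤ ∫⁻ y, ENNReal.ofReal (ψ y) ∂volume := setLIntegral_le_lintegral _ _
      _ = ENNReal.ofReal (∫ y, ψ y) :=
          (MeasureTheory.ofReal_integral_eq_lintegral_ofReal hψint
            (ae_of_all _ hψnn)).symm
      _ = ENNReal.ofReal ((STP.cc d ^ (β i / 2) * pun x ^ (-(β i / 2))) *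
            (STP.Cdc d h (β i) * Real.exp (-(β i / (4 * (1 + h))) * ‖x - μ1‖ ^ 2))) := by
          rw [hψval]
  -- the dominating function H
  set Hf : Fin T → ST.E d → ℝ := fun i x =>
    r i / Zs i * (1 - α) * STP.cc d ^ β i * STP.Cdc d h (β i) *
      (Real.exp (-(β i / 4) * ‖x - μ2‖ ^ 2) *
        Real.exp (-(β i / (4 * (1 + h))) * ‖x - μ1‖ ^ 2)) with hHfdef
  have hHnn : ∀ i x, 0 ≤ Hf i x := by
    intro i x
    simp only [hHfdef]
    exact mul_nonneg
      (mul_nonneg (mul_nonneg (mul_nonneg (div_nonneg (hr i).le (Zpos i).le)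
        (by linarith)) (hccβ _).le) (STP.Cdc_pos hh (hβpos i)).le)
      (mul_nonneg (Real.exp_nonneg _) (Real.exp_nonneg _))
  have key : ∀ (i : Fin T) (x : ST.E d), x ∈ B →
      ENNReal.ofReal (ρstar (i, x)) * Pstar (i, x) Aᶜ ≤ ENNReal.ofReal (Hf i x) := by
    intro i x hx
    have hx' : x j ≤ 0 := le_of_lt hx
    rw [hPsA i x hx]
    have hreal : ρstar (i, x) * ((1 - α) *
        ((STP.cc d ^ (β i / 2) * pun x ^ (-(β i / 2))) *
          (STP.Cdc d h (β i) * Real.exp (-(β i / (4 * (1 + h))) * ‖x - μ1‖ ^ 2))))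
        ≤ Hf i x := by
      rw [hρstar]
      simp only
      have hpp : pun x ^ β i * pun x ^ (-(β i / 2)) = pun x ^ (β i / 2) := by
        rw [← Real.rpow_add (pun_pos x)]
        congr 1
        ring
      have hb1 : pun x ^ (β i / 2) ≤
          STP.cc d ^ (β i / 2) * Real.exp (-(β i / 4) * ‖x - μ2‖ ^ 2) := by
        have h3 := Real.rpow_le_rpow (pun_pos x).le (up1 x hx')
          (by linarith [hβpos i] : (0:ℝ) ≤ β i / 2)
        rw [Real.mul_rpow hcc.le (Real.exp_nonneg _), ← Real.exp_mul] at h3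
        calc pun x ^ (β i / 2)
            ≤ STP.cc d ^ (β i / 2) * Real.exp (-‖x - μ2‖ ^ 2 / 2 * (β i / 2)) := h3
          _ = STP.cc d ^ (β i / 2) * Real.exp (-(β i / 4) * ‖x - μ2‖ ^ 2) := by
              congr 1; congr 1; ring
      have hQnn : 0 ≤ r i / Zs i * (1 - α) * STP.cc d ^ (β i / 2) * STP.Cdc d h (β i) *
          Real.exp (-(β i / (4 * (1 + h))) * ‖x - μ1‖ ^ 2) :=
        mul_nonneg (mul_nonneg (mul_nonneg (mul_nonneg
          (div_nonneg (hr i).le (Zpos i).le) (by linarith)) (hccβ _).le)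
          (STP.Cdc_pos hh (hβpos i)).le) (Real.exp_nonneg _)
      calc r i * pun x ^ β i / Zs i * ((1 - α) *
          ((STP.cc d ^ (β i / 2) * pun x ^ (-(β i / 2))) *
            (STP.Cdc d h (β i) * Real.exp (-(β i / (4 * (1 + h))) * ‖x - μ1‖ ^ 2))))
          = (r i / Zs i * (1 - α) * STP.cc d ^ (β i / 2) * STP.Cdc d h (β i) *
              Real.exp (-(β i / (4 * (1 + h))) * ‖x - μ1‖ ^ 2)) *
              (pun x ^ β i * pun x ^ (-(β i / 2))) := by ring
        _ = (r i / Zs i * (1 - α) * STP.cc d ^ (β i / 2) * STP.Cdc d h (β i) *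
              Real.exp (-(β i / (4 * (1 + h))) * ‖x - μ1‖ ^ 2)) * pun x ^ (β i / 2) := by
            rw [hpp]
        _ ≤ (r i / Zs i * (1 - α) * STP.cc d ^ (β i / 2) * STP.Cdc d h (β i) *
              Real.exp (-(β i / (4 * (1 + h))) * ‖x - μ1‖ ^ 2)) *
              (STP.cc d ^ (β i / 2) * Real.exp (-(β i / 4) * ‖x - μ2‖ ^ 2)) :=
            mul_le_mul_of_nonneg_left hb1 hQnn
        _ = r i / Zs i * (1 - α) * (STP.cc d ^ (β i / 2) * STP.cc d ^ (β i / 2)) *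
              STP.Cdc d h (β i) *
              (Real.exp (-(β i / 4) * ‖x - μ2‖ ^ 2) *
                Real.exp (-(β i / (4 * (1 + h))) * ‖x - μ1‖ ^ 2)) := by ring
        _ = Hf i x := by
            rw [← Real.rpow_add hcc, add_halves]
    calc ENNReal.ofReal (ρstar (i, x)) * (ENNReal.ofReal (1 - α) *
        ∫⁻ y in Bᶜ, ENNReal.ofReal (ST.gaussDens x (2 * h / β i) y) *
          ENNReal.ofReal (ST.accMove ρstar qd i x y) ∂volume)
        ≤ ENNReal.ofReal (ρstar (i, x)) * (ENNReal.ofReal (1 - α) *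
            ENNReal.ofReal ((STP.cc d ^ (β i / 2) * pun x ^ (-(β i / 2))) *
              (STP.Cdc d h (β i) *
                Real.exp (-(β i / (4 * (1 + h))) * ‖x - μ1‖ ^ 2)))) :=
          mul_le_mul_right (mul_le_mul_right (hψle i x hx) _) _
      _ = ENNReal.ofReal (ρstar (i, x) * ((1 - α) *
            ((STP.cc d ^ (β i / 2) * pun x ^ (-(β i / 2))) *
              (STP.Cdc d h (β i) *
                Real.exp (-(β i / (4 * (1 + h))) * ‖x - μ1‖ ^ 2))))) := by
          rw [← ENNReal.ofReal_mul (by linarith : (0:ℝ) ≤ 1 - α),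
            ← ENNReal.ofReal_mul (hρnn _)]
      _ ≤ ENNReal.ofReal (Hf i x) := ENNReal.ofReal_le_ofReal hreal
  -- integral of H
  have hHint : ∀ i : Fin T, Integrable (Hf i) := by
    intro i
    have ha4 : (0:ℝ) < β i / 4 := by linarith [hβpos i]
    have hb4 : (0:ℝ) < β i / (4 * (1 + h)) := div_pos (hβpos i) (by linarith)
    simp only [hHfdef]
    exact (STP.integrable_two_gauss ha4 hb4 μ2 μ1).const_mul _
  have hHbound : ∀ i : Fin T, ∫ x, Hf i x ≤
      2 * r i * (STP.kpc d h * Real.exp (-(β i0 * D ^ 2 / (2 + h)))) := by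
    intro i
    have ha4 : (0:ℝ) < β i / 4 := by linarith [hβpos i]
    have hb4 : (0:ℝ) < β i / (4 * (1 + h)) := div_pos (hβpos i) (by linarith)
    have hHval : ∫ x, Hf i x =
        r i / Zs i * (1 - α) * STP.cc d ^ β i * STP.Cdc d h (β i) *
          (STP.Ppc d h (β i) * Real.exp (-(β i * D ^ 2 / (2 + h)))) := by
      have hsc : β i / 4 * (β i / (4 * (1 + h))) / (β i / 4 + β i / (4 * (1 + h)))
          = β i / (4 * (2 + h)) := by
        have hne : β i / 4 + β i / (4 * (1 + h)) ≠ 0 := ne_of_gt (add_pos ha4 hb4)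
        have h1ne : (1:ℝ) + h ≠ 0 := ne_of_gt h1h
        have h2ne : (2:ℝ) + h ≠ 0 := ne_of_gt h2h
        have hβne : β i ≠ 0 := (hβpos i).ne'
        rw [div_eq_iff hne]
        field_simp
        ring
      simp only [hHfdef]
      rw [integral_const_mul, STP.integral_two_gauss ha4 hb4 μ2 μ1, hdiff2, hsc,
        show -(β i / (4 * (2 + h))) * (4 * D ^ 2) = -(β i * D ^ 2 / (2 + h)) from by
          have h2ne : (2:ℝ) + h ≠ 0 := ne_of_gt h2h
          field_simp]
      simp only [STP.Ppc]
    rw [hHval]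
    have hEx : Real.exp (-(β i * D ^ 2 / (2 + h))) ≤
        Real.exp (-(β i0 * D ^ 2 / (2 + h))) := by
      apply Real.exp_le_exp.2
      apply neg_le_neg
      apply (div_le_div_iff_of_pos_right h2h).2
      nlinarith [hβ0le i, sq_nonneg D]
    have h12 : (1/2 : ℝ) ≤ (1/2 : ℝ) ^ β i := by
      have h1 := Real.rpow_le_rpow_of_exponent_ge (by norm_num : (0:ℝ) < 1/2)
        (by norm_num : (1/2 : ℝ) ≤ 1) (hβle1 i)
      rwa [Real.rpow_one] at h1
    have hPznn : 0 ≤ STP.cc d ^ β i * STP.Pzc d (β i) :=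
      mul_nonneg (hccβ _).le (STP.Pzc_pos (hβpos i)).le
    have hX2 : (1 - α) * (STP.cc d ^ β i * STP.Pzc d (β i)) / Zs i ≤ 2 := by
      rw [div_le_iff₀ (Zpos i)]
      have m1 := mul_le_mul_of_nonneg_right h12 hPznn
      have m2 : (1 - α) * (STP.cc d ^ β i * STP.Pzc d (β i)) ≤
          1 * (STP.cc d ^ β i * STP.Pzc d (β i)) :=
        mul_le_mul_of_nonneg_right (by linarith) hPznn
      have hZl' := hZl i
      nlinarith
    calc r i / Zs i * (1 - α) * STP.cc d ^ β i * STP.Cdc d h (β i) *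
          (STP.Ppc d h (β i) * Real.exp (-(β i * D ^ 2 / (2 + h))))
        = (r i / Zs i * (1 - α) * STP.cc d ^ β i) *
            ((STP.Cdc d h (β i) * STP.Ppc d h (β i)) *
              Real.exp (-(β i * D ^ 2 / (2 + h)))) := by ring
      _ = (r i / Zs i * (1 - α) * STP.cc d ^ β i) *
            ((STP.kpc d h * STP.Pzc d (β i)) *
              Real.exp (-(β i * D ^ 2 / (2 + h)))) := by
          rw [STP.key_const hh (hβpos i)]
      _ = (r i * STP.kpc d h) *
            ((1 - α) * (STP.cc d ^ β i * STP.Pzc d (β i)) / Zs i *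
              Real.exp (-(β i * D ^ 2 / (2 + h)))) := by ring
      _ ≤ (r i * STP.kpc d h) * (2 * Real.exp (-(β i0 * D ^ 2 / (2 + h)))) := by
          apply mul_le_mul_of_nonneg_left ?_
            (mul_nonneg (hr i).le (STP.kpc_pos hh).le)
          exact mul_le_mul hX2 hEx (Real.exp_nonneg _) (by norm_num)
      _ = 2 * r i * (STP.kpc d h * Real.exp (-(β i0 * D ^ 2 / (2 + h)))) := by ring
  -- flow bound
  have hHm : Measurable fun p : Fin T × ST.E d => ENNReal.ofReal (Hf p.1 p.2) := by
    apply Measurable.ennreal_ofReal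
    apply STP.measurable_pair
    intro i
    have : Continuous (Hf i) := by
      simp only [hHfdef]
      exact continuous_const.mul
        ((STP.cont_expMul (β i / 4) μ2).mul (STP.cont_expMul (β i / (4 * (1 + h))) μ1))
    exact this.measurable
  have hKnn : (0:ℝ) ≤ 2 * (STP.kpc d h * Real.exp (-(β i0 * D ^ 2 / (2 + h)))) :=
    mul_nonneg (by norm_num) (mul_nonneg (STP.kpc_pos hh).le (Real.exp_nonneg _))
  have hflow : ST.flow PiStar Pstar A ≤
      2 * (STP.kpc d h * Real.exp (-(β i0 * D ^ 2 / (2 + h)))) := by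
    apply ENNReal.toReal_le_of_le_ofReal hKnn
    calc ∫⁻ p in A, Pstar p Aᶜ ∂PiStar
        = ∫⁻ p in A, ENNReal.ofReal (ρstar p) * Pstar p Aᶜ ∂(ST.base2 T d) := by
          rw [hPiStar, restrict_withDensity hAm,
            lintegral_withDensity_eq_lintegral_mul_non_measurable _ hρm
              (ae_of_all _ fun p => ENNReal.ofReal_lt_top)]
          rfl
      _ ≤ ∫⁻ p in A, ENNReal.ofReal (Hf p.1 p.2) ∂(ST.base2 T d) := by
          apply setLIntegral_mono hHm
          rintro ⟨i, x⟩ hp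
          exact key i x hp
      _ ≤ ∫⁻ p, ENNReal.ofReal (Hf p.1 p.2) ∂(ST.base2 T d) :=
          setLIntegral_le_lintegral _ _
      _ = ∑ i : Fin T, ∫⁻ x, ENNReal.ofReal (Hf i x) := by
          rw [show (ST.base2 T d) = Measure.count.prod volume from rfl]
          exact STP.lintegral_count_prod _ hHm
      _ = ∑ i : Fin T, ENNReal.ofReal (∫ x, Hf i x) := by
          refine Finset.sum_congr rfl fun i _ => ?_
          exact (MeasureTheory.ofReal_integral_eq_lintegral_ofReal (hHint i)
            (ae_of_all _ fun x => hHnn i x)).symm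
      _ ≤ ∑ i : Fin T, ENNReal.ofReal
            (2 * r i * (STP.kpc d h * Real.exp (-(β i0 * D ^ 2 / (2 + h))))) :=
          Finset.sum_le_sum fun i _ => ENNReal.ofReal_le_ofReal (hHbound i)
      _ = ENNReal.ofReal (∑ i : Fin T,
            2 * r i * (STP.kpc d h * Real.exp (-(β i0 * D ^ 2 / (2 + h))))) :=
          (ENNReal.ofReal_sum_of_nonneg fun i _ =>
            mul_nonneg (mul_nonneg (by norm_num) (hr i).le)
              (mul_nonneg (STP.kpc_pos hh).le (Real.exp_nonneg _))).symm
      _ = ENNReal.ofReal (2 * (STP.kpc d h * Real.exp (-(β i0 * D ^ 2 / (2 + h))))) := by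
          congr 1
          rw [Finset.sum_congr rfl fun i _ => show
            2 * r i * (STP.kpc d h * Real.exp (-(β i0 * D ^ 2 / (2 + h))))
              = r i * (2 * (STP.kpc d h * Real.exp (-(β i0 * D ^ 2 / (2 + h))))) from by ring,
            ← Finset.sum_mul, hrsum, one_mul]
  -- conclusion
  have hs2 : (0:ℝ) < 1 / 2 - s := by linarith
  have hfin : ST.sCond PiStar Pstar s ≤
      ST.flow PiStar Pstar A / ((PiStar A).toReal - s) := by
    apply csInf_le
    · refine ⟨0, ?_⟩
      rintro t ⟨A', _, h1, _, rfl⟩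
      exact div_nonneg ENNReal.toReal_nonneg (by linarith)
    · exact ⟨A, hAm, by rw [htR]; exact hs, by rw [htR], rfl⟩
  calc ST.sCond PiStar Pstar s
      ≤ ST.flow PiStar Pstar A / ((PiStar A).toReal - s) := hfin
    _ = ST.flow PiStar Pstar A / (1 / 2 - s) := by rw [htR]
    _ ≤ (2 * (STP.kpc d h * Real.exp (-(β i0 * D ^ 2 / (2 + h))))) / (1 / 2 - s) :=
        (div_le_div_iff_of_pos_right hs2).2 hflow
    _ = 4 / (1 - 2 * s) * STP.kpc d h * Real.exp (-(β i0 * D ^ 2 / (2 + h))) := by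
        have h2s : (1:ℝ) - 2 * s > 0 := by linarith
        field_simp
        ring
    _ = 4 / (1 - 2 * s) * (2 / (2 + h)) ^ ((d : ℝ) / 2) *
          Real.exp (-(β i0 * D ^ 2 / (2 + h))) := by
        simp only [STP.kpc]
end
end

section
/- Let f: ℝ^d → ℝ be differentiable, L-smooth and convex, let w_1,…,w_K > 0 sum to one, let μ_1,…,μ_K ∈ ℝ^d with D = max_j ‖μ_j‖, and define U(x) = −log Σ_{j=1}^K w_j e^{−f(x−μ_j)}. Then: (a) ‖∇U(x) − ∇f(x)‖ ≤ L·D for all x ∈ ℝ^d; and (b) U(y) − U(x) − ∇U(x)ᵀ(y−x) ≤ (L/2)‖y−x‖² for all x, y ∈ ℝ^d. -/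
open MeasureTheory
open scoped ENNReal RealInnerProductSpace

noncomputable section

open InnerProductSpace in
private lemma stmt17_lip {d : ℕ} {f : ST.E d → ℝ} {L : ℝ} (hL : 0 < L)
    (hsmooth : ST.LSmooth L f)
    (hconvex : ∀ x y : ST.E d, 0 ≤ f y - f x - (inner ℝ (gradient f x) (y - x) : ℝ))
    (u v : ST.E d) : ‖gradient f v - gradient f u‖ ≤ L * ‖v - u‖ := by
  set g := gradient f v - gradient f u with hg
  set z := v - L⁻¹ • g with hz
  have h1 := hconvex u z
  have h2 := hsmooth v z
  have h3 := hsmooth u v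
  have hzv : z - v = -(L⁻¹ • g) := by rw [hz]; abel
  have hzu : z - u = (v - u) - L⁻¹ • g := by rw [hz]; abel
  have hnorm : ‖z - v‖ ^ 2 = L⁻¹ ^ 2 * ‖g‖ ^ 2 := by
    rw [hzv, norm_neg, norm_smul, mul_pow]
    congr 1
    rw [Real.norm_eq_abs, abs_of_pos (by positivity)]
  have e1 : (inner ℝ (gradient f u) (z - u) : ℝ)
      = inner ℝ (gradient f u) (v - u) - L⁻¹ * inner ℝ (gradient f u) g := by
    rw [hzu, inner_sub_right, real_inner_smul_right]
  have e2 : (inner ℝ (gradient f v) (z - v) : ℝ) = -(L⁻¹ * inner ℝ (gradient f v) g) := by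
    rw [hzv, inner_neg_right, real_inner_smul_right]
  have e3 : (inner ℝ (gradient f v) g : ℝ) - inner ℝ (gradient f u) g = ‖g‖ ^ 2 := by
    rw [← inner_sub_left, ← hg, real_inner_self_eq_norm_sq]
  rw [e1] at h1
  rw [e2, hnorm] at h2
  have e4 : L⁻¹ * (inner ℝ (gradient f v) g : ℝ) - L⁻¹ * inner ℝ (gradient f u) g
      = L⁻¹ * ‖g‖ ^ 2 := by rw [← mul_sub, e3]
  have key : ‖g‖ ^ 2 * (L⁻¹ - L / 2 * L⁻¹ ^ 2) ≤ L / 2 * ‖v - u‖ ^ 2 := by nlinarith [e4]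
  have hsimp : L⁻¹ - L / 2 * L⁻¹ ^ 2 = 1 / (2 * L) := by field_simp; ring
  rw [hsimp] at key
  have h4 : ‖g‖ ^ 2 ≤ L ^ 2 * ‖v - u‖ ^ 2 := by
    have h2L : (0:ℝ) < 2 * L := by positivity
    rw [mul_one_div, div_le_iff₀ h2L] at key
    nlinarith [key]
  nlinarith [norm_nonneg g, norm_nonneg (v - u), mul_nonneg hL.le (norm_nonneg (v - u))]

open InnerProductSpace in
private lemma stmt17_mixgrad {d K : ℕ} (f : ST.E d → ℝ)
    (hdiff : Differentiable ℝ f) (w : Fin K → ℝ)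
    (μm : Fin K → ST.E d) (x : ST.E d)
    (hpos : 0 < ∑ j, w j * Real.exp (-f (x - μm j))) :
    HasGradientAt (fun y => -Real.log (∑ j, w j * Real.exp (-f (y - μm j))))
      (∑ j, ((w j * Real.exp (-f (x - μm j))) / (∑ i, w i * Real.exp (-f (x - μm i)))) •
        gradient f (x - μm j)) x := by
  have hSder : HasFDerivAt (fun y => ∑ j, w j * Real.exp (-f (y - μm j)))
      (∑ j, (-(w j * Real.exp (-f (x - μm j)))) • fderiv ℝ f (x - μm j)) x := by
    apply HasFDerivAt.fun_sum
    intro j _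
    have h1 : HasFDerivAt (fun y : ST.E d => y - μm j)
        (ContinuousLinearMap.id ℝ _) x := (hasFDerivAt_id x).sub_const _
    have h2 : HasFDerivAt (fun y => f (y - μm j)) (fderiv ℝ f (x - μm j)) x := by
      exact ((hdiff (x - μm j)).hasFDerivAt).comp x h1
    have h4 := (h2.neg.exp).const_mul (w j)
    refine h4.congr_fderiv ?_
    module
  have hlog := ((Real.hasDerivAt_log hpos.ne').comp_hasFDerivAt x hSder).neg
  rw [hasGradientAt_iff_hasFDerivAt]
  refine hlog.congr_fderiv ?_
  symm
  rw [map_sum, Finset.smul_sum, ← Finset.sum_neg_distrib]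
  refine Finset.sum_congr rfl fun j _ => ?_
  have hgr : (toDual ℝ (ST.E d)) (gradient f (x - μm j)) = fderiv ℝ f (x - μm j) := by
    rw [gradient]; exact (toDual ℝ _).apply_symm_apply _
  rw [LinearIsometryEquiv.map_smul, hgr, smul_smul, ← neg_smul]
  congr 1
  field_simp

/-- Gradient bounds for the mixture potential: for `L`-smooth convex `f`,
`U(x) = −log Σ_j w_j e^{−f(x−μ_j)}` satisfies `‖∇U(x) − ∇f(x)‖ ≤ L·D` with
`D = max_j ‖μ_j‖`, and `U` is `L`-smooth in the sense that
`U(y) − U(x) − ⟨∇U(x), y−x⟩ ≤ (L/2)‖y−x‖²`. -/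
theorem stmt17 (d K : ℕ) (hK : 0 < K)
    (f : ST.E d → ℝ) (L : ℝ) (hL : 0 < L)
    (hdiff : Differentiable ℝ f)
    (hsmooth : ST.LSmooth L f)
    (hconvex : ∀ x y : ST.E d, 0 ≤ f y - f x - (inner ℝ (gradient f x) (y - x) : ℝ))
    (w : Fin K → ℝ) (hw : ∀ j, 0 < w j) (hwsum : ∑ j, w j = 1)
    (μm : Fin K → ST.E d)
    (D : ℝ) (hD : IsGreatest (Set.range fun j => ‖μm j‖) D)
    (U : ST.E d → ℝ)
    (hU : ∀ x, U x = -Real.log (∑ j, w j * Real.exp (-f (x - μm j)))) :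
    (∀ x : ST.E d, ‖gradient U x - gradient f x‖ ≤ L * D) ∧
      (∀ x y : ST.E d,
        U y - U x - (inner ℝ (gradient U x) (y - x) : ℝ) ≤ L / 2 * ‖y - x‖ ^ 2) := by
  have hne : Nonempty (Fin K) := ⟨⟨0, hK⟩⟩
  have hSpos : ∀ x : ST.E d, 0 < ∑ j, w j * Real.exp (-f (x - μm j)) := fun x =>
    Finset.sum_pos (fun j _ => mul_pos (hw j) (Real.exp_pos _)) Finset.univ_nonempty
  have hUfun : U = fun y => -Real.log (∑ j, w j * Real.exp (-f (y - μm j))) := funext hU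
  have hgradU : ∀ x : ST.E d, gradient U x =
      ∑ j, ((w j * Real.exp (-f (x - μm j))) / (∑ i, w i * Real.exp (-f (x - μm i)))) •
        gradient f (x - μm j) := by
    intro x
    rw [hUfun]
    exact (stmt17_mixgrad f hdiff w μm x (hSpos x)).gradient
  have hθnn : ∀ x : ST.E d, ∀ j, 0 ≤
      (w j * Real.exp (-f (x - μm j))) / (∑ i, w i * Real.exp (-f (x - μm i))) := fun x j =>
    div_nonneg (mul_nonneg (hw j).le (Real.exp_pos _).le) (hSpos x).le
  have hθsum : ∀ x : ST.E d,
      ∑ j, (w j * Real.exp (-f (x - μm j))) / (∑ i, w i * Real.exp (-f (x - μm i))) = 1 := by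
    intro x
    rw [← Finset.sum_div, div_self (hSpos x).ne']
  have hD0 : 0 ≤ D := by
    obtain ⟨j, hj⟩ := hD.1
    exact hj ▸ norm_nonneg _
  constructor
  · intro x
    rw [hgradU x]
    have hsplit : (∑ j, ((w j * Real.exp (-f (x - μm j))) /
          (∑ i, w i * Real.exp (-f (x - μm i)))) • gradient f (x - μm j)) - gradient f x
        = ∑ j, ((w j * Real.exp (-f (x - μm j))) / (∑ i, w i * Real.exp (-f (x - μm i)))) •
          (gradient f (x - μm j) - gradient f x) := by
      simp only [smul_sub, Finset.sum_sub_distrib, ← Finset.sum_smul, hθsum x, one_smul]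
    rw [hsplit]
    calc ‖∑ j, ((w j * Real.exp (-f (x - μm j))) / (∑ i, w i * Real.exp (-f (x - μm i)))) •
          (gradient f (x - μm j) - gradient f x)‖
        ≤ ∑ j, ((w j * Real.exp (-f (x - μm j))) / (∑ i, w i * Real.exp (-f (x - μm i)))) *
            (L * D) := by
          refine (norm_sum_le _ _).trans (Finset.sum_le_sum fun j _ => ?_)
          rw [norm_smul, Real.norm_eq_abs, abs_of_nonneg (hθnn x j)]
          refine mul_le_mul_of_nonneg_left ?_ (hθnn x j)
          have hlip := stmt17_lip hL hsmooth hconvex x (x - μm j)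
          have hxx : x - μm j - x = -μm j := by abel
          rw [hxx, norm_neg] at hlip
          refine hlip.trans ?_
          exact mul_le_mul_of_nonneg_left (hD.2 ⟨j, rfl⟩) hL.le
      _ = L * D := by rw [← Finset.sum_mul, hθsum x, one_mul]
  · intro x y
    have hΔ : ∀ j, f (y - μm j) - f (x - μm j) ≤
        (inner ℝ (gradient f (x - μm j)) (y - x) : ℝ) + L / 2 * ‖y - x‖ ^ 2 := by
      intro j
      have h := hsmooth (x - μm j) (y - μm j)
      have h' : y - μm j - (x - μm j) = y - x := by abel
      rw [h'] at h
      linarith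
    have hSy_eq : ∑ j, w j * Real.exp (-f (y - μm j)) =
        (∑ i, w i * Real.exp (-f (x - μm i))) *
          ∑ j, ((w j * Real.exp (-f (x - μm j))) / (∑ i, w i * Real.exp (-f (x - μm i)))) *
            Real.exp (-(f (y - μm j) - f (x - μm j))) := by
      rw [Finset.mul_sum]
      refine Finset.sum_congr rfl fun j _ => ?_
      have hexp : Real.exp (-f (x - μm j)) * Real.exp (-(f (y - μm j) - f (x - μm j)))
          = Real.exp (-f (y - μm j)) := by rw [← Real.exp_add]; congr 1; ring
      have hcancel : ∀ (S a e : ℝ), S ≠ 0 → S * (a / S * e) = a * e := by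
        intros S a e hS; field_simp
      rw [hcancel _ _ _ (hSpos x).ne', mul_assoc, hexp]
    have hexp_sum : Real.exp (∑ j,
          ((w j * Real.exp (-f (x - μm j))) / (∑ i, w i * Real.exp (-f (x - μm i)))) *
            (-(f (y - μm j) - f (x - μm j)))) ≤
        ∑ j, ((w j * Real.exp (-f (x - μm j))) / (∑ i, w i * Real.exp (-f (x - μm i)))) *
          Real.exp (-(f (y - μm j) - f (x - μm j))) := by
      have amgm := Real.geom_mean_le_arith_mean_weighted Finset.univ
        (fun j => (w j * Real.exp (-f (x - μm j))) / (∑ i, w i * Real.exp (-f (x - μm i))))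
        (fun j => Real.exp (-(f (y - μm j) - f (x - μm j))))
        (fun j _ => hθnn x j) (hθsum x) (fun j _ => (Real.exp_pos _).le)
      refine le_trans (le_of_eq ?_) amgm
      rw [Real.exp_sum]
      refine Finset.prod_congr rfl fun j _ => ?_
      rw [Real.rpow_def_of_pos (Real.exp_pos _), Real.log_exp, mul_comm]
    have hUyx : U y - U x ≤ ∑ j,
        ((w j * Real.exp (-f (x - μm j))) / (∑ i, w i * Real.exp (-f (x - μm i)))) *
          (f (y - μm j) - f (x - μm j)) := by
      rw [hU y, hU x]
      have hge : (∑ i, w i * Real.exp (-f (x - μm i))) * Real.exp (∑ j,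
            ((w j * Real.exp (-f (x - μm j))) / (∑ i, w i * Real.exp (-f (x - μm i)))) *
              (-(f (y - μm j) - f (x - μm j)))) ≤ ∑ j, w j * Real.exp (-f (y - μm j)) := by
        rw [hSy_eq]
        exact mul_le_mul_of_nonneg_left hexp_sum (hSpos x).le
      have hlog := Real.log_le_log (mul_pos (hSpos x) (Real.exp_pos _)) hge
      rw [Real.log_mul (hSpos x).ne' (Real.exp_ne_zero _), Real.log_exp] at hlog
      have hrw : ∑ j, ((w j * Real.exp (-f (x - μm j))) /
            (∑ i, w i * Real.exp (-f (x - μm i)))) * (f (y - μm j) - f (x - μm j))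
          = -∑ j, ((w j * Real.exp (-f (x - μm j))) /
            (∑ i, w i * Real.exp (-f (x - μm i)))) * (-(f (y - μm j) - f (x - μm j))) := by
        rw [← Finset.sum_neg_distrib]
        exact Finset.sum_congr rfl fun j _ => by ring
      rw [hrw]
      linarith
    have hinner : (inner ℝ (gradient U x) (y - x) : ℝ) = ∑ j,
        ((w j * Real.exp (-f (x - μm j))) / (∑ i, w i * Real.exp (-f (x - μm i)))) *
          (inner ℝ (gradient f (x - μm j)) (y - x) : ℝ) := by
      rw [hgradU x, sum_inner]
      exact Finset.sum_congr rfl fun j _ => real_inner_smul_left _ _ _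
    have hfin : ∑ j, ((w j * Real.exp (-f (x - μm j))) /
          (∑ i, w i * Real.exp (-f (x - μm i)))) * (f (y - μm j) - f (x - μm j))
        ≤ (∑ j, ((w j * Real.exp (-f (x - μm j))) / (∑ i, w i * Real.exp (-f (x - μm i)))) *
            (inner ℝ (gradient f (x - μm j)) (y - x) : ℝ)) + L / 2 * ‖y - x‖ ^ 2 := by
      have h1 : ∑ j, ((w j * Real.exp (-f (x - μm j))) /
            (∑ i, w i * Real.exp (-f (x - μm i)))) * (f (y - μm j) - f (x - μm j))
          ≤ ∑ j, (((w j * Real.exp (-f (x - μm j))) /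
              (∑ i, w i * Real.exp (-f (x - μm i)))) *
                (inner ℝ (gradient f (x - μm j)) (y - x) : ℝ) +
            ((w j * Real.exp (-f (x - μm j))) / (∑ i, w i * Real.exp (-f (x - μm i)))) *
              (L / 2 * ‖y - x‖ ^ 2)) := by
        refine Finset.sum_le_sum fun j _ => ?_
        rw [← mul_add]
        exact mul_le_mul_of_nonneg_left (hΔ j) (hθnn x j)
      rw [Finset.sum_add_distrib, ← Finset.sum_mul, hθsum x, one_mul] at h1
      exact h1
    rw [hinner]
    linarith
end
end

section
/- Let T ≥ 1 and K ≥ 1 be integers, let (r_i)_{i∈[T]} and (w_j)_{j∈[K]} be strictly positive probability vectors, and let P̄ be any Markov transition matrix on [T]×[K] that is reversible with respect to π(i,j) = r_i·w_j. Then λ(P̄) ≥ (1/(2T))·min{ Λ₁, Λ₂ }, where Λ₁ = min_{i∈[T−1], j∈[K]} r_i·P̄((i,j),(i+1,j)) and Λ₂ = min_{j,j'∈[K]} ( min_{i∈[T]} r_i / w_{j'} )·P̄((1,j),(1,j')). -/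
open MeasureTheory
open scoped ENNReal RealInnerProductSpace

noncomputable section

namespace Stmt19Aux

open Finset

/-- Elementary increment of `g` along the temperature coordinate. -/
def D1 {T K : ℕ} (g : Fin T × Fin K → ℝ) (k : ℕ) (j : Fin K) : ℝ :=
  if h : k + 1 < T then g (⟨k + 1, h⟩, j) - g (⟨k, Nat.lt_of_succ_lt h⟩, j) else 0

/-- Sum of squared increments along a full column. -/
def S {T K : ℕ} (g : Fin T × Fin K → ℝ) (j : Fin K) : ℝ :=
  ∑ k ∈ Finset.range (T - 1), (D1 g k j) ^ 2

lemma S_nonneg {T K : ℕ} (g : Fin T × Fin K → ℝ) (j : Fin K) : 0 ≤ S g j :=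
  Finset.sum_nonneg fun _ _ => sq_nonneg _

lemma telescope {T K : ℕ} (hT : 0 < T) (g : Fin T × Fin K → ℝ) (j : Fin K) :
    ∀ (n : ℕ) (hn : n < T),
      g (⟨n, hn⟩, j) - g (⟨0, hT⟩, j) = ∑ k ∈ Finset.range n, D1 g k j := by
  intro n
  induction n with
  | zero => intro hn; simp
  | succ n ih =>
    intro hn
    rw [Finset.sum_range_succ, ← ih (Nat.lt_of_succ_lt hn), D1, dif_pos hn]
    ring

lemma variance_double {ι : Type*} [Fintype ι] (p g : ι → ℝ) (hp : ∑ k, p k = 1) :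
    ∑ k, ∑ l, (g l - g k) ^ 2 * p k * p l = 2 * ST.finVariance p g := by
  have hV : ST.finVariance p g
      = (∑ k, g k ^ 2 * p k) - (∑ l, g l * p l) ^ 2 := by
    unfold ST.finVariance
    have h1 : ∀ k : ι, (g k - ∑ l, g l * p l) ^ 2 * p k
        = g k ^ 2 * p k - (2 * (∑ l, g l * p l)) * (g k * p k)
          + ((∑ l, g l * p l) ^ 2) * p k := by
      intro k; ring
    rw [Finset.sum_congr rfl fun k _ => h1 k]
    rw [Finset.sum_add_distrib, Finset.sum_sub_distrib, ← Finset.mul_sum, ← Finset.mul_sum, hp]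
    ring
  have h2 : ∀ k : ι, ∑ l, (g l - g k) ^ 2 * p k * p l
      = p k * (∑ l, g l ^ 2 * p l) - (2 * (g k * p k)) * (∑ l, g l * p l)
        + (g k ^ 2 * p k) := by
    intro k
    have h3 : ∀ l : ι, (g l - g k) ^ 2 * p k * p l
        = p k * (g l ^ 2 * p l) - (2 * (g k * p k)) * (g l * p l)
          + (g k ^ 2 * p k) * p l := by
      intro l; ring
    rw [Finset.sum_congr rfl fun l _ => h3 l]
    rw [Finset.sum_add_distrib, Finset.sum_sub_distrib, ← Finset.mul_sum, ← Finset.mul_sum,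
      ← Finset.mul_sum, hp, mul_one]
  rw [Finset.sum_congr rfl fun k _ => h2 k]
  rw [Finset.sum_add_distrib, Finset.sum_sub_distrib]
  have e1 : ∑ k : ι, p k * (∑ l : ι, g l ^ 2 * p l) = ∑ l : ι, g l ^ 2 * p l := by
    rw [← Finset.sum_mul, hp, one_mul]
  have e2 : ∑ k : ι, (2 * (g k * p k)) * (∑ l : ι, g l * p l)
      = 2 * (∑ l : ι, g l * p l) ^ 2 := by
    rw [← Finset.sum_mul, ← Finset.mul_sum]
    ring
  rw [e1, e2, hV]
  ring

lemma pair_bound {T K : ℕ} (hT : 0 < T) (g : Fin T × Fin K → ℝ)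
    (i i' : Fin T) (j j' : Fin K) :
    (g (i', j') - g (i, j)) ^ 2 ≤
      2 * T * (S g j + (g (⟨0, hT⟩, j') - g (⟨0, hT⟩, j)) ^ 2 + S g j') := by
  set c := g (⟨0, hT⟩, j') - g (⟨0, hT⟩, j) with hc
  set v : ℕ → ℝ := fun t =>
    if t < i.val then -(D1 g t j) else if t = i.val then c else D1 g (t - (i.val + 1)) j'
    with hv
  set n := i.val + 1 + i'.val with hn
  have hbody : ∀ (f : ℝ → ℝ),
      ∑ t ∈ Finset.range n, f (v t)
        = (∑ t ∈ Finset.range i.val, f (-(D1 g t j))) + f c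
          + ∑ t ∈ Finset.range i'.val, f (D1 g t j') := by
    intro f
    rw [hn, Finset.sum_range_add, Finset.sum_range_succ]
    congr 1
    · congr 1
      · apply Finset.sum_congr rfl
        intro t ht
        rw [Finset.mem_range] at ht
        rw [hv]; simp only [if_pos ht]
      · rw [hv]; simp
    · apply Finset.sum_congr rfl
      intro t _
      rw [hv]
      have h1 : ¬ (i.val + 1 + t < i.val) := by omega
      have h2 : ¬ (i.val + 1 + t = i.val) := by omega
      have h3 : i.val + 1 + t - (i.val + 1) = t := by omega
      simp only [if_neg h1, if_neg h2, h3]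
  have hsum : ∑ t ∈ Finset.range n, v t = g (i', j') - g (i, j) := by
    have := hbody id
    simp only [id] at this
    rw [this, Finset.sum_neg_distrib]
    rw [← telescope hT g j i.val i.isLt, ← telescope hT g j' i'.val i'.isLt, hc]
    ring
  have hsq : ∑ t ∈ Finset.range n, (v t) ^ 2
      = (∑ t ∈ Finset.range i.val, (D1 g t j) ^ 2) + c ^ 2
        + ∑ t ∈ Finset.range i'.val, (D1 g t j') ^ 2 := by
    have := hbody (fun x => x ^ 2)
    simp only [neg_sq] at this
    exact this
  have hCS : (g (i', j') - g (i, j)) ^ 2 ≤ (n : ℝ) * ∑ t ∈ Finset.range n, (v t) ^ 2 := by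
    rw [← hsum]
    have := sq_sum_le_card_mul_sum_sq (s := Finset.range n) (f := v)
    simpa using this
  refine hCS.trans ?_
  rw [hsq]
  have hle1 : ∑ t ∈ Finset.range i.val, (D1 g t j) ^ 2 ≤ S g j := by
    apply Finset.sum_le_sum_of_subset_of_nonneg
    · exact Finset.range_subset_range.2 (by omega)
    · intro t _ _; exact sq_nonneg _
  have hle2 : ∑ t ∈ Finset.range i'.val, (D1 g t j') ^ 2 ≤ S g j' := by
    apply Finset.sum_le_sum_of_subset_of_nonneg
    · exact Finset.range_subset_range.2 (by omega)
    · intro t _ _; exact sq_nonneg _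
  have hnle : (n : ℝ) ≤ 2 * T := by
    have : n ≤ 2 * T := by omega
    exact_mod_cast this
  have hnn : (0 : ℝ) ≤ (∑ t ∈ Finset.range i.val, (D1 g t j) ^ 2) + c ^ 2
      + ∑ t ∈ Finset.range i'.val, (D1 g t j') ^ 2 := by positivity
  calc (n : ℝ) * ((∑ t ∈ Finset.range i.val, (D1 g t j) ^ 2) + c ^ 2
        + ∑ t ∈ Finset.range i'.val, (D1 g t j') ^ 2)
      ≤ (2 * T) * (S g j + c ^ 2 + S g j') := by
        apply mul_le_mul hnle _ hnn (by positivity)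
        have := sq_nonneg c
        linarith
  _ = 2 * T * (S g j + c ^ 2 + S g j') := by ring

end Stmt19Aux

/-- Canonical-path bound for the projected chain: for any Markov
transition matrix `P̄` on `[T]×[K]` reversible with respect to `π(i,j) = r_i·w_j`,
`λ(P̄) ≥ (1/(2T))·min{Λ₁, Λ₂}` with `Λ₁, Λ₂` as in the statement. -/
theorem stmt19 (T K : ℕ) (hT : 0 < T) (hK : 0 < K)
    (r : Fin T → ℝ) (hr : ∀ i, 0 < r i) (hrsum : ∑ i, r i = 1)
    (w : Fin K → ℝ) (hw : ∀ j, 0 < w j) (hwsum : ∑ j, w j = 1)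
    (Pbar : Fin T × Fin K → Fin T × Fin K → ℝ)
    (hnn : ∀ a b, 0 ≤ Pbar a b) (hrow : ∀ a, ∑ b, Pbar a b = 1)
    (hrev : ∀ a b, r a.1 * w a.2 * Pbar a b = r b.1 * w b.2 * Pbar b a)
    (Λ₁ Λ₂ : ℝ)
    (hΛ₁ : Λ₁ = sInf { v | ∃ (i : Fin T) (hi : i.val + 1 < T) (j : Fin K),
      v = r i * Pbar (i, j) (⟨i.val + 1, hi⟩, j) })
    (hΛ₂ : Λ₂ = sInf { v | ∃ j j' : Fin K,
      v = (⨅ i, r i) / w j' * Pbar (⟨0, hT⟩, j) (⟨0, hT⟩, j') }) :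
    1 / (2 * T) * min Λ₁ Λ₂ ≤ ST.finGap (fun a => r a.1 * w a.2) Pbar := by
  classical
  set p : Fin T × Fin K → ℝ := fun a => r a.1 * w a.2 with hpdef
  have hppos : ∀ a, 0 < p a := fun a => mul_pos (hr a.1) (hw a.2)
  have hpsum : ∑ a : Fin T × Fin K, p a = 1 := by
    rw [Fintype.sum_prod_type]
    have h1 : ∀ i : Fin T, ∑ j, p (i, j) = r i := by
      intro i
      have h2 : ∀ j : Fin K, p (i, j) = r i * w j := fun j => rfl
      rw [Finset.sum_congr rfl fun j _ => h2 j, ← Finset.mul_sum, hwsum, mul_one]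
    rw [Finset.sum_congr rfl fun i _ => h1 i, hrsum]
  set m := min Λ₁ Λ₂ with hm
  rcases le_or_gt m 0 with hm0 | hm0
  · have h1 : 1 / (2 * (T : ℝ)) * m ≤ 0 := by
      apply mul_nonpos_of_nonneg_of_nonpos _ hm0
      positivity
    refine h1.trans ?_
    unfold ST.finGap
    apply Real.sInf_nonneg
    rintro t ⟨g, hV, rfl⟩
    apply div_nonneg _ hV.le
    unfold ST.finDirichlet
    apply mul_nonneg (by norm_num)
    apply Finset.sum_nonneg; intro k _
    apply Finset.sum_nonneg; intro l _
    exact mul_nonneg (mul_nonneg (sq_nonneg _) (hppos k).le) (hnn k l)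
  · -- main case: 0 < m
    have hΛ₁pos : 0 < Λ₁ := lt_of_lt_of_le hm0 (min_le_left _ _)
    have hΛ₂pos : 0 < Λ₂ := lt_of_lt_of_le hm0 (min_le_right _ _)
    have hT2 : 2 ≤ T := by
      by_contra hcon
      have hempty : { v | ∃ (i : Fin T) (hi : i.val + 1 < T) (j : Fin K),
          v = r i * Pbar (i, j) (⟨i.val + 1, hi⟩, j) } = ∅ := by
        ext v
        simp only [Set.mem_setOf_eq, Set.mem_empty_iff_false, iff_false, not_exists]
        intro i hi
        have := i.isLt
        omega
      rw [hempty, Real.sInf_empty] at hΛ₁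
      rw [hΛ₁] at hΛ₁pos
      exact lt_irrefl 0 hΛ₁pos
    have hΛ₁le : ∀ (k : ℕ) (hk : k + 1 < T) (j : Fin K),
        Λ₁ ≤ r ⟨k, Nat.lt_of_succ_lt hk⟩ *
          Pbar (⟨k, Nat.lt_of_succ_lt hk⟩, j) (⟨k + 1, hk⟩, j) := by
      intro k hk j
      rw [hΛ₁]
      apply csInf_le
      · refine ⟨0, ?_⟩
        rintro v ⟨i, hi, j', rfl⟩
        exact mul_nonneg (hr i).le (hnn _ _)
      · exact ⟨⟨k, Nat.lt_of_succ_lt hk⟩, hk, j, rfl⟩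
    haveI : Nonempty (Fin T) := ⟨⟨0, hT⟩⟩
    have hrinf0 : 0 ≤ ⨅ i, r i := le_ciInf fun i => (hr i).le
    have hrinfle : ∀ i : Fin T, (⨅ i', r i') ≤ r i := fun i =>
      ciInf_le (Set.finite_range r).bddBelow i
    have hΛ₂le : ∀ j j' : Fin K,
        Λ₂ ≤ (⨅ i, r i) / w j' * Pbar (⟨0, hT⟩, j) (⟨0, hT⟩, j') := by
      intro j j'
      rw [hΛ₂]
      apply csInf_le
      · refine ⟨0, ?_⟩
        rintro v ⟨j1, j2, rfl⟩
        exact mul_nonneg (div_nonneg hrinf0 (hw j2).le) (hnn _ _)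
      · exact ⟨j, j', rfl⟩
    -- nonemptiness of the gap set
    have hg₀ : 0 < ST.finVariance p (fun a : Fin T × Fin K => (a.1.val : ℝ)) := by
      unfold ST.finVariance
      set g₀ : Fin T × Fin K → ℝ := fun a => (a.1.val : ℝ) with hg₀def
      set c := ∑ l : Fin T × Fin K, g₀ l * p l with hcdef
      apply Finset.sum_pos' (fun a _ => mul_nonneg (sq_nonneg _) (hppos a).le)
      rcases eq_or_ne c 0 with hc | hc
      · refine ⟨((⟨1, by omega⟩ : Fin T), (⟨0, hK⟩ : Fin K)), Finset.mem_univ _, ?_⟩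
        have hval : g₀ ((⟨1, by omega⟩ : Fin T), (⟨0, hK⟩ : Fin K)) = 1 := by
          simp [hg₀def]
        rw [hval, hc, sub_zero, one_pow, one_mul]
        exact hppos _
      · refine ⟨((⟨0, hT⟩ : Fin T), (⟨0, hK⟩ : Fin K)), Finset.mem_univ _, ?_⟩
        have hval : g₀ ((⟨0, hT⟩ : Fin T), (⟨0, hK⟩ : Fin K)) = 0 := by
          simp [hg₀def]
        rw [hval, zero_sub]
        apply mul_pos _ (hppos _)
        have : (-c) ≠ 0 := neg_ne_zero.mpr hc
        positivity
    unfold ST.finGap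
    apply le_csInf
    · exact ⟨_, (fun a : Fin T × Fin K => (a.1.val : ℝ)), hg₀, rfl⟩
    rintro t ⟨g, hVpos, rfl⟩
    rw [le_div_iff₀ hVpos]
    -- abbreviations
    set V := ST.finVariance p g with hVdef
    set Ed := ST.finDirichlet p Pbar g with hEdef
    set i0 : Fin T := ⟨0, hT⟩ with hi0
    set lo : Fin (T - 1) → Fin T := fun k => ⟨k.val, by have := k.isLt; omega⟩ with hlo
    set hi : Fin (T - 1) → Fin T := fun k => ⟨k.val + 1, by have := k.isLt; omega⟩ with hhi
    set SA : ℝ := ∑ j, w j * Stmt19Aux.S g j with hSAdef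
    set SB : ℝ := ∑ j, ∑ j', w j * w j' * (g (i0, j') - g (i0, j)) ^ 2 with hSBdef
    set EV : ℝ := ∑ k : Fin (T - 1), ∑ j,
      (g (hi k, j) - g (lo k, j)) ^ 2 * p (lo k, j) * Pbar (lo k, j) (hi k, j) with hEVdef
    set EH : ℝ := ∑ j, ∑ j',
      (g (i0, j') - g (i0, j)) ^ 2 * p (i0, j) * Pbar (i0, j) (i0, j') with hEHdef
    have hSAnn : 0 ≤ SA := Finset.sum_nonneg fun j _ =>
      mul_nonneg (hw j).le (Stmt19Aux.S_nonneg g j)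
    have hSBnn : 0 ≤ SB := Finset.sum_nonneg fun j _ => Finset.sum_nonneg fun j' _ =>
      mul_nonneg (mul_nonneg (hw j).le (hw j').le) (sq_nonneg _)
    -- sum factorization helpers
    have hfact : ∀ v : Fin K → ℝ,
        ∑ a : Fin T × Fin K, p a * v a.2 = ∑ j, w j * v j := by
      intro v
      rw [Fintype.sum_prod_type]
      have h1 : ∀ i : Fin T, ∑ j, p (i, j) * v j = r i * ∑ j, w j * v j := by
        intro i
        rw [Finset.mul_sum]
        refine Finset.sum_congr rfl fun j _ => ?_
        show r i * w j * v j = r i * (w j * v j)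
        ring
      rw [Finset.sum_congr rfl fun i _ => h1 i, ← Finset.sum_mul, hrsum, one_mul]
    have hdouble : ∀ u : Fin K → Fin K → ℝ,
        ∑ a : Fin T × Fin K, ∑ b : Fin T × Fin K, u a.2 b.2 * p a * p b
          = ∑ j, w j * ∑ j', w j' * u j j' := by
      intro u
      have h1 : ∀ a : Fin T × Fin K, ∑ b : Fin T × Fin K, u a.2 b.2 * p a * p b
          = p a * ∑ j', w j' * u a.2 j' := by
        intro a
        rw [← hfact fun j' => u a.2 j', Finset.mul_sum]
        exact Finset.sum_congr rfl fun b _ => by ring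
      rw [Finset.sum_congr rfl fun a _ => h1 a]
      exact hfact fun j => ∑ j', w j' * u j j'
    -- Step 1 : variance bound
    have hstep1 : 2 * V ≤ 2 * T * (2 * SA + SB) := by
      rw [hVdef, ← Stmt19Aux.variance_double p g hpsum]
      have hb : ∀ a b : Fin T × Fin K, (g b - g a) ^ 2 * p a * p b
          ≤ (2 * T * (Stmt19Aux.S g a.2 + (g (i0, b.2) - g (i0, a.2)) ^ 2
              + Stmt19Aux.S g b.2)) * p a * p b := by
        intro a b
        apply mul_le_mul_of_nonneg_right _ (hppos b).le
        apply mul_le_mul_of_nonneg_right _ (hppos a).le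
        have h := Stmt19Aux.pair_bound hT g a.1 b.1 a.2 b.2
        simpa using h
      calc ∑ a : Fin T × Fin K, ∑ b : Fin T × Fin K, (g b - g a) ^ 2 * p a * p b
          ≤ ∑ a : Fin T × Fin K, ∑ b : Fin T × Fin K,
            (2 * T * (Stmt19Aux.S g a.2 + (g (i0, b.2) - g (i0, a.2)) ^ 2
              + Stmt19Aux.S g b.2)) * p a * p b :=
          Finset.sum_le_sum fun a _ => Finset.sum_le_sum fun b _ => hb a b
        _ = ∑ j, w j * ∑ j', w j' * (2 * T * (Stmt19Aux.S g j
              + (g (i0, j') - g (i0, j)) ^ 2 + Stmt19Aux.S g j')) :=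
          hdouble fun j j' => 2 * T * (Stmt19Aux.S g j
              + (g (i0, j') - g (i0, j)) ^ 2 + Stmt19Aux.S g j')
        _ = 2 * T * (2 * SA + SB) := by
          have hin : ∀ j, ∑ j', w j' * (2 * T * (Stmt19Aux.S g j
              + (g (i0, j') - g (i0, j)) ^ 2 + Stmt19Aux.S g j'))
              = 2 * T * Stmt19Aux.S g j
                + 2 * T * (∑ j', w j' * (g (i0, j') - g (i0, j)) ^ 2)
                + 2 * T * (∑ j', w j' * Stmt19Aux.S g j') := by
            intro j
            have h3 : ∀ j' : Fin K, w j' * (2 * T * (Stmt19Aux.S g j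
                + (g (i0, j') - g (i0, j)) ^ 2 + Stmt19Aux.S g j'))
                = (2 * T * Stmt19Aux.S g j) * w j'
                  + (2 * (T : ℝ)) * (w j' * (g (i0, j') - g (i0, j)) ^ 2)
                  + (2 * (T : ℝ)) * (w j' * Stmt19Aux.S g j') := fun j' => by ring
            rw [Finset.sum_congr rfl fun j' _ => h3 j', Finset.sum_add_distrib,
              Finset.sum_add_distrib, ← Finset.mul_sum, hwsum, mul_one,
              ← Finset.mul_sum, ← Finset.mul_sum]
          rw [Finset.sum_congr rfl fun j _ => congrArg (w j * ·) (hin j)]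
          have h4 : ∀ j : Fin K, w j * (2 * T * Stmt19Aux.S g j
              + 2 * T * (∑ j', w j' * (g (i0, j') - g (i0, j)) ^ 2)
              + 2 * T * (∑ j', w j' * Stmt19Aux.S g j'))
              = (2 * (T : ℝ)) * (w j * Stmt19Aux.S g j)
                + (2 * (T : ℝ)) * (∑ j', w j * w j' * (g (i0, j') - g (i0, j)) ^ 2)
                + ((2 * (T : ℝ)) * (∑ j', w j' * Stmt19Aux.S g j')) * w j := by
            intro j
            have hB : w j * ∑ j', w j' * (g (i0, j') - g (i0, j)) ^ 2
                = ∑ j', w j * w j' * (g (i0, j') - g (i0, j)) ^ 2 := by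
              rw [Finset.mul_sum]
              exact Finset.sum_congr rfl fun j' _ => by ring
            rw [← hB]
            ring
          rw [Finset.sum_congr rfl fun j _ => h4 j, Finset.sum_add_distrib,
            Finset.sum_add_distrib, ← Finset.mul_sum, ← Finset.mul_sum, ← Finset.mul_sum,
            hwsum, mul_one, ← hSAdef, ← hSBdef]
          ring
    -- Step 2a : vertical edges
    have hΛ₁le' : ∀ (k : Fin (T - 1)) (j : Fin K),
        Λ₁ ≤ r (lo k) * Pbar (lo k, j) (hi k, j) := by
      intro k j
      have hk : k.val + 1 < T := by have := k.isLt; omega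
      exact hΛ₁le k.val hk j
    have hD1eq : ∀ (k : Fin (T - 1)) (j : Fin K),
        Stmt19Aux.D1 g k.val j = g (hi k, j) - g (lo k, j) := by
      intro k j
      have hk : k.val + 1 < T := by have := k.isLt; omega
      rw [Stmt19Aux.D1, dif_pos hk]
    have h2a : Λ₁ * SA ≤ EV := by
      have hSconv : ∀ j, Stmt19Aux.S g j = ∑ k : Fin (T - 1), (Stmt19Aux.D1 g k.val j) ^ 2 :=
        fun j => (Fin.sum_univ_eq_sum_range (fun k => (Stmt19Aux.D1 g k j) ^ 2) (T - 1)).symm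
      calc Λ₁ * SA = ∑ j, ∑ k : Fin (T - 1), Λ₁ * (w j * (Stmt19Aux.D1 g k.val j) ^ 2) := by
            rw [hSAdef, Finset.mul_sum]
            refine Finset.sum_congr rfl fun j _ => ?_
            rw [hSconv j, Finset.mul_sum, Finset.mul_sum]
        _ = ∑ k : Fin (T - 1), ∑ j, Λ₁ * (w j * (Stmt19Aux.D1 g k.val j) ^ 2) :=
            Finset.sum_comm
        _ ≤ ∑ k : Fin (T - 1), ∑ j,
              (r (lo k) * Pbar (lo k, j) (hi k, j)) * (w j * (Stmt19Aux.D1 g k.val j) ^ 2) :=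
            Finset.sum_le_sum fun k _ => Finset.sum_le_sum fun j _ =>
              mul_le_mul_of_nonneg_right (hΛ₁le' k j)
                (mul_nonneg (hw j).le (sq_nonneg _))
        _ = EV := by
            rw [hEVdef]
            refine Finset.sum_congr rfl fun k _ => Finset.sum_congr rfl fun j _ => ?_
            rw [hD1eq k j]
            show r (lo k) * Pbar (lo k, j) (hi k, j) * (w j * (g (hi k, j) - g (lo k, j)) ^ 2)
              = (g (hi k, j) - g (lo k, j)) ^ 2 * (r (lo k) * w j) * Pbar (lo k, j) (hi k, j)
            ring
    -- Step 2b : horizontal edges at level 0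
    have h2b : Λ₂ * SB ≤ EH := by
      rw [hSBdef, hEHdef, Finset.mul_sum]
      refine Finset.sum_le_sum fun j _ => ?_
      rw [Finset.mul_sum]
      refine Finset.sum_le_sum fun j' _ => ?_
      have h1 := mul_le_mul_of_nonneg_right (hΛ₂le j j')
        (mul_nonneg (mul_nonneg (hw j).le (hw j').le) (sq_nonneg (g (i0, j') - g (i0, j))))
      refine le_trans (le_of_eq (by ring)) (h1.trans ?_)
      have hwne : w j' ≠ 0 := (hw j').ne'
      have heq : (⨅ i, r i) / w j' * Pbar (i0, j) (i0, j')
            * (w j * w j' * (g (i0, j') - g (i0, j)) ^ 2)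
          = ((⨅ i, r i) * Pbar (i0, j) (i0, j'))
            * (w j * (g (i0, j') - g (i0, j)) ^ 2) := by
        field_simp
      rw [heq]
      have h2 : ((⨅ i, r i) * Pbar (i0, j) (i0, j'))
            * (w j * (g (i0, j') - g (i0, j)) ^ 2)
          ≤ (r i0 * Pbar (i0, j) (i0, j')) * (w j * (g (i0, j') - g (i0, j)) ^ 2) := by
        apply mul_le_mul_of_nonneg_right
          (mul_le_mul_of_nonneg_right (hrinfle i0) (hnn _ _))
          (mul_nonneg (hw j).le (sq_nonneg _))
      refine h2.trans (le_of_eq ?_)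
      show r i0 * Pbar (i0, j) (i0, j') * (w j * (g (i0, j') - g (i0, j)) ^ 2)
        = (g (i0, j') - g (i0, j)) ^ 2 * (r i0 * w j) * Pbar (i0, j) (i0, j')
      ring
    -- Step 2c : Dirichlet lower bound
    have hFnn : ∀ x : (Fin T × Fin K) × (Fin T × Fin K),
        0 ≤ (g x.2 - g x.1) ^ 2 * p x.1 * Pbar x.1 x.2 := fun x =>
      mul_nonneg (mul_nonneg (sq_nonneg _) (hppos _).le) (hnn _ _)
    have hFswap : ∀ a b : Fin T × Fin K,
        (g a - g b) ^ 2 * p b * Pbar b a = (g b - g a) ^ 2 * p a * Pbar a b := by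
      intro a b
      have hpa : p a * Pbar a b = p b * Pbar b a := hrev a b
      calc (g a - g b) ^ 2 * p b * Pbar b a
          = (g b - g a) ^ 2 * (p b * Pbar b a) := by ring
        _ = (g b - g a) ^ 2 * (p a * Pbar a b) := by rw [hpa]
        _ = (g b - g a) ^ 2 * p a * Pbar a b := by ring
    have h2c : 2 * EV + EH ≤ 2 * Ed := by
      have h2E : 2 * Ed = ∑ x : (Fin T × Fin K) × (Fin T × Fin K),
          (g x.2 - g x.1) ^ 2 * p x.1 * Pbar x.1 x.2 := by
        have hA : ∑ x : (Fin T × Fin K) × (Fin T × Fin K),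
            (g x.2 - g x.1) ^ 2 * p x.1 * Pbar x.1 x.2
            = ∑ a : Fin T × Fin K, ∑ b : Fin T × Fin K, (g b - g a) ^ 2 * p a * Pbar a b :=
          Fintype.sum_prod_type _
        rw [hEdef]
        unfold ST.finDirichlet
        rw [hA]
        ring
      set F : (Fin T × Fin K) × (Fin T × Fin K) → ℝ :=
        fun x => (g x.2 - g x.1) ^ 2 * p x.1 * Pbar x.1 x.2 with hFdef
      have hinj1 : Function.Injective
          (fun q : Fin (T - 1) × Fin K => ((lo q.1, q.2), (hi q.1, q.2))) := by
        intro q q' h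
        have h1 : (lo q.1).val = (lo q'.1).val := congrArg (fun x => x.1.1.val) h
        have h2 : q.2 = q'.2 := congrArg (fun x => x.1.2) h
        exact Prod.ext (Fin.ext h1) h2
      have hinj2 : Function.Injective
          (fun q : Fin (T - 1) × Fin K => ((hi q.1, q.2), (lo q.1, q.2))) := by
        intro q q' h
        have h1 : (lo q.1).val = (lo q'.1).val := congrArg (fun x => x.2.1.val) h
        have h2 : q.2 = q'.2 := congrArg (fun x => x.2.2) h
        exact Prod.ext (Fin.ext h1) h2
      have hinj3 : Function.Injective
          (fun q : Fin K × Fin K => ((i0, q.1), (i0, q.2))) := by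
        intro q q' h
        have h1 : q.1 = q'.1 := congrArg (fun x => x.1.2) h
        have h2 : q.2 = q'.2 := congrArg (fun x => x.2.2) h
        exact Prod.ext h1 h2
      set s1 : Finset ((Fin T × Fin K) × (Fin T × Fin K)) :=
        Finset.univ.image (fun q : Fin (T - 1) × Fin K => ((lo q.1, q.2), (hi q.1, q.2)))
        with hs1
      set s2 : Finset ((Fin T × Fin K) × (Fin T × Fin K)) :=
        Finset.univ.image (fun q : Fin (T - 1) × Fin K => ((hi q.1, q.2), (lo q.1, q.2)))
        with hs2
      set s3 : Finset ((Fin T × Fin K) × (Fin T × Fin K)) :=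
        Finset.univ.image (fun q : Fin K × Fin K => ((i0, q.1), (i0, q.2))) with hs3
      have hmem1 : ∀ x ∈ s1, x.2.1.val = x.1.1.val + 1 := by
        intro x hx
        rw [hs1, Finset.mem_image] at hx
        obtain ⟨q, -, rfl⟩ := hx
        rfl
      have hmem2 : ∀ x ∈ s2, x.1.1.val = x.2.1.val + 1 := by
        intro x hx
        rw [hs2, Finset.mem_image] at hx
        obtain ⟨q, -, rfl⟩ := hx
        rfl
      have hmem3 : ∀ x ∈ s3, x.1.1.val = 0 ∧ x.2.1.val = 0 := by
        intro x hx
        rw [hs3, Finset.mem_image] at hx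
        obtain ⟨q, -, rfl⟩ := hx
        exact ⟨rfl, rfl⟩
      have hd12 : Disjoint s1 s2 := by
        rw [Finset.disjoint_left]
        intro x hx1 hx2
        have := hmem1 x hx1
        have := hmem2 x hx2
        omega
      have hd13 : Disjoint s1 s3 := by
        rw [Finset.disjoint_left]
        intro x hx1 hx3
        have := hmem1 x hx1
        have := (hmem3 x hx3).2
        omega
      have hd23 : Disjoint s2 s3 := by
        rw [Finset.disjoint_left]
        intro x hx2 hx3
        have := hmem2 x hx2
        have := (hmem3 x hx3).1
        omega
      have hs1sum : ∑ x ∈ s1, F x = EV := by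
        rw [hs1, Finset.sum_image (fun q _ q' _ h => hinj1 h), Fintype.sum_prod_type, hEVdef]
      have hs2sum : ∑ x ∈ s2, F x = EV := by
        rw [hs2, Finset.sum_image (fun q _ q' _ h => hinj2 h), Fintype.sum_prod_type, hEVdef]
        refine Finset.sum_congr rfl fun k _ => Finset.sum_congr rfl fun j _ => ?_
        exact hFswap (lo k, j) (hi k, j)
      have hs3sum : ∑ x ∈ s3, F x = EH := by
        rw [hs3, Finset.sum_image (fun q _ q' _ h => hinj3 h), Fintype.sum_prod_type, hEHdef]
      have hunion : ∑ x ∈ (s1 ∪ s2) ∪ s3, F x = EV + EV + EH := by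
        rw [Finset.sum_union (by
            rw [Finset.disjoint_union_left]; exact ⟨hd13, hd23⟩),
          Finset.sum_union hd12, hs1sum, hs2sum, hs3sum]
      have hsub : ∑ x ∈ (s1 ∪ s2) ∪ s3, F x ≤ ∑ x : (Fin T × Fin K) × (Fin T × Fin K), F x :=
        Finset.sum_le_sum_of_subset_of_nonneg (Finset.subset_univ _)
          (fun x _ _ => hFnn x)
      rw [h2E]
      calc 2 * EV + EH = EV + EV + EH := by ring
        _ = ∑ x ∈ (s1 ∪ s2) ∪ s3, F x := hunion.symm
        _ ≤ _ := hsub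
    -- assemble
    have hTR : (0 : ℝ) < (T : ℝ) := by exact_mod_cast hT
    have hc1 : m * (2 * SA + SB) ≤ 2 * Ed := by
      have h5 : m * SA ≤ Λ₁ * SA := mul_le_mul_of_nonneg_right (min_le_left _ _) hSAnn
      have h6 : m * SB ≤ Λ₂ * SB := mul_le_mul_of_nonneg_right (min_le_right _ _) hSBnn
      nlinarith [h2a, h2b, h2c]
    have hc2 : m * (2 * V) ≤ m * (2 * T * (2 * SA + SB)) :=
      mul_le_mul_of_nonneg_left hstep1 hm0.le
    have hc3 : (2 * (T : ℝ)) * (m * (2 * SA + SB)) ≤ (2 * (T : ℝ)) * (2 * Ed) :=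
      mul_le_mul_of_nonneg_left hc1 (by positivity)
    have hgoal : m * V ≤ Ed * (2 * T) := by nlinarith
    have h2Tpos : (0 : ℝ) < 2 * (T : ℝ) := by positivity
    calc 1 / (2 * (T : ℝ)) * m * V = (m * V) / (2 * T) := by ring
      _ ≤ (Ed * (2 * T)) / (2 * T) := by
          exact (div_le_div_iff_of_pos_right h2Tpos).mpr hgoal
      _ = Ed := by field_simp
end
end
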